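/- arXiv:2508.01094 — 6 statements merged into one kernel-verified Lean document; each statement's English description precedes it below -/
import Mathlib

section
/- Let X be a normed linear space and E ⊆ X. Then 0 ∈ ri(co E) if and only if there exist m ∈ N with m ≥ dim(span E) + 1, points z^1,...,z^m ∈ E and scalars t^1,...,t^m > 0 such that the sum of t^i z^i is 0, the sum of t^i is 1, and span{z^1,...,z^m} = span E. -/
noncomputable section


open Set

lemma aux_span_set_eq {X : Type*} [NormedAddCommGroup X] [NormedSpace ℝ X] {E : Set X}
    (h0 : (0 : X) ∈ affineSpan ℝ E) :
    (affineSpan ℝ E : Set X) = (Submodule.span ℝ E : Set X) := by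
  rw [← affineSpan_insert_eq_affineSpan ℝ h0, affineSpan_insert_zero]

lemma aux_ri_iff {X : Type*} [NormedAddCommGroup X] [NormedSpace ℝ X] (E : Set X) :
    (0 : X) ∈ intrinsicInterior ℝ (convexHull ℝ E) ↔
      (0 : X) ∈ convexHull ℝ E ∧ ∃ ε > 0, ∀ x : X, x ∈ Submodule.span ℝ E → ‖x‖ < ε →
        x ∈ convexHull ℝ E := by
  constructor
  · intro h
    have h0 : (0 : X) ∈ convexHull ℝ E := intrinsicInterior_subset h
    refine ⟨h0, ?_⟩
    obtain ⟨y, hy, hy0⟩ := mem_intrinsicInterior.mp h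
    have h0A : (0 : X) ∈ affineSpan ℝ (convexHull ℝ E) := subset_affineSpan ℝ _ h0
    have hset : (affineSpan ℝ (convexHull ℝ E) : Set X) = (Submodule.span ℝ E : Set X) := by
      rw [affineSpan_convexHull]
      exact aux_span_set_eq (by rwa [affineSpan_convexHull] at h0A)
    have hy' : y = ⟨0, h0A⟩ := Subtype.ext hy0
    subst hy'
    rw [mem_interior_iff_mem_nhds, mem_nhds_subtype] at hy
    obtain ⟨u, hu, huE⟩ := hy
    obtain ⟨ε, hε, hball⟩ := Metric.mem_nhds_iff.mp hu
    refine ⟨ε, hε, fun x hx hxε => ?_⟩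
    have hxA : x ∈ affineSpan ℝ (convexHull ℝ E) := by rw [← SetLike.mem_coe, hset]; exact hx
    have : (⟨x, hxA⟩ : affineSpan ℝ (convexHull ℝ E)) ∈ (↑) ⁻¹' u := by
      apply hball
      simpa [Metric.mem_ball, dist_zero_right] using hxε
    exact huE this
  · rintro ⟨h0, ε, hε, hball⟩
    have h0A : (0 : X) ∈ affineSpan ℝ (convexHull ℝ E) := subset_affineSpan ℝ _ h0
    have hset : (affineSpan ℝ (convexHull ℝ E) : Set X) = (Submodule.span ℝ E : Set X) := by
      rw [affineSpan_convexHull]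
      exact aux_span_set_eq (by rwa [affineSpan_convexHull] at h0A)
    refine mem_intrinsicInterior.mpr ⟨⟨0, h0A⟩, ?_, rfl⟩
    rw [mem_interior_iff_mem_nhds, mem_nhds_subtype]
    refine ⟨Metric.ball 0 ε, Metric.ball_mem_nhds _ hε, ?_⟩
    rintro ⟨q, hq⟩ hqball
    have hqV : q ∈ Submodule.span ℝ E := by rw [← SetLike.mem_coe, ← hset]; exact hq
    have : ‖q‖ < ε := by simpa [Metric.mem_ball, dist_zero_right] using hqball
    exact hball q hqV this

lemma aux_rev {X : Type*} [NormedAddCommGroup X] [NormedSpace ℝ X] (E : Set X)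
    [FiniteDimensional ℝ (Submodule.span ℝ E)] {m : ℕ} (hm : 1 ≤ m)
    (z : Fin m → X) (t : Fin m → ℝ) (hzE : ∀ i, z i ∈ E) (ht : ∀ i, 0 < t i)
    (hsum0 : ∑ i, t i • z i = 0) (hsum1 : ∑ i, t i = 1)
    (hspan : Submodule.span ℝ (Set.range z) = Submodule.span ℝ E) :
    ∃ ε > 0, ∀ x : X, x ∈ Submodule.span ℝ E → ‖x‖ < ε → x ∈ convexHull ℝ E := by
  set V := Submodule.span ℝ E with hV
  set L : (Fin m → ℝ) →ₗ[ℝ] X := Fintype.linearCombination ℝ z with hL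
  have hrange : LinearMap.range L = V := by
    rw [hL, Fintype.range_linearCombination, hspan]
  -- right inverse
  have hLV : ∀ c : Fin m → ℝ, L c ∈ V := fun c => hrange ▸ LinearMap.mem_range_self L c
  set L' : (Fin m → ℝ) →ₗ[ℝ] V := L.codRestrict V hLV with hL'
  have hL'surj : LinearMap.range L' = ⊤ := by
    rw [LinearMap.range_eq_top]
    rintro ⟨v, hv⟩
    rw [← hrange] at hv
    obtain ⟨c, hc⟩ := hv
    exact ⟨c, Subtype.ext hc⟩
  obtain ⟨g, hg⟩ := L'.exists_rightInverse_of_surjective hL'surj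
  have hgapply : ∀ v : V, ∑ i, g v i • z i = (v : X) := by
    intro v
    have := congrArg (fun f => ((f v : V) : X)) hg
    simpa [hL', hL, LinearMap.codRestrict, Fintype.linearCombination_apply] using this
  -- continuity bound
  set G := LinearMap.toContinuousLinearMap g with hG
  set C : ℝ := ‖G‖ + 1 with hC
  have hCpos : 0 < C := by positivity
  have hGb : ∀ v : V, ‖g v‖ ≤ C * ‖v‖ := by
    intro v
    calc ‖g v‖ = ‖G v‖ := rfl
    _ ≤ ‖G‖ * ‖v‖ := G.le_opNorm v
    _ ≤ C * ‖v‖ := by apply mul_le_mul_of_nonneg_right (by simp [hC]) (norm_nonneg _)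
  -- min weight
  have hne : (Finset.univ : Finset (Fin m)).Nonempty :=
    Finset.univ_nonempty_iff.mpr (Fin.pos_iff_nonempty.mp hm)
  set b : ℝ := Finset.univ.inf' hne t with hb
  have hbpos : 0 < b := by
    rw [hb, Finset.lt_inf'_iff]
    exact fun i _ => ht i
  have hble : ∀ i, b ≤ t i := fun i => Finset.inf'_le _ (Finset.mem_univ i)
  have htle1 : ∀ i, t i ≤ 1 := by
    intro i
    rw [← hsum1]
    exact Finset.single_le_sum (fun j _ => (ht j).le) (Finset.mem_univ i)
  refine ⟨b / ((m + 1) * C), by positivity, fun x hx hxε => ?_⟩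
  set c : Fin m → ℝ := g ⟨x, hx⟩ with hc
  have hcx : ∑ i, c i • z i = x := hgapply ⟨x, hx⟩
  have hcb : ∀ i, |c i| ≤ b / (m + 1) := by
    intro i
    have h1 : |c i| ≤ ‖c‖ := by
      simpa [Real.norm_eq_abs] using norm_le_pi_norm c i
    have h2 : ‖c‖ ≤ C * ‖x‖ := by simpa using hGb ⟨x, hx⟩
    have h3 : C * ‖x‖ ≤ C * (b / ((m + 1) * C)) :=
      mul_le_mul_of_nonneg_left hxε.le hCpos.le
    have h4 : C * (b / ((m + 1) * C)) = b / (m + 1) := by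
      field_simp
    exact h1.trans (h2.trans (h3.trans_eq h4))
  have hcsum : |∑ j, c j| ≤ m * (b / (m + 1)) := by
    calc |∑ j, c j| ≤ ∑ j, |c j| := Finset.abs_sum_le_sum_abs _ _
    _ ≤ ∑ _j : Fin m, b / (m + 1) := Finset.sum_le_sum fun j _ => hcb j
    _ = m * (b / (m + 1)) := by simp [Finset.sum_const, mul_comm]
  set s : Fin m → ℝ := fun i => t i + c i - (∑ j, c j) * t i with hs
  have hs0 : ∀ i, 0 ≤ s i := by
    intro i
    have h1 : (∑ j, c j) * t i ≤ m * (b / (m + 1)) := by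
      calc (∑ j, c j) * t i ≤ |∑ j, c j| * t i :=
        mul_le_mul_of_nonneg_right (le_abs_self _) (ht i).le
      _ ≤ m * (b / (m + 1)) * 1 := by
          apply mul_le_mul hcsum (htle1 i) (ht i).le
          positivity
      _ = m * (b / (m + 1)) := mul_one _
    have h2 : -(b / (m + 1)) ≤ c i := neg_le_of_abs_le (hcb i)
    have h3 : b ≤ t i := hble i
    have h4 : b / (m+1) + m * (b / (m+1)) = b := by field_simp; ring
    simp only [hs]
    linarith
  have hssum : ∑ i, s i = 1 := by
    simp only [hs]
    rw [Finset.sum_sub_distrib, Finset.sum_add_distrib, ← Finset.mul_sum, hsum1, mul_one]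
    ring
  have hsz : ∑ i, s i • z i = x := by
    simp only [hs, sub_smul, add_smul, mul_smul]
    rw [Finset.sum_sub_distrib, Finset.sum_add_distrib, ← Finset.smul_sum, hsum0, hcx, smul_zero]
    simp
  exact mem_convexHull_of_exists_fintype s z hs0 hssum hzE hsz

-- representation lemma
lemma aux_rep {X : Type*} [NormedAddCommGroup X] [NormedSpace ℝ X] {E : Set X}
    {x : X} (hx : x ∈ convexHull ℝ E) :
    ∃ (F : Finset X) (w : X → ℝ), ↑F ⊆ E ∧ (∀ y, 0 ≤ w y) ∧ (∀ y ∉ F, w y = 0) ∧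
      ∑ y ∈ F, w y = 1 ∧ ∑ y ∈ F, w y • y = x := by
  rw [convexHull_eq_union_convexHull_finite_subsets] at hx
  obtain ⟨F, hFE, hxF⟩ := Set.mem_iUnion₂.mp hx
  obtain ⟨w, hw0, hw1, hwx⟩ := Finset.mem_convexHull'.mp hxF
  classical
  refine ⟨F, fun y => if y ∈ F then w y else 0, hFE, ?_, ?_, ?_, ?_⟩
  · intro y
    simp only
    split_ifs with h
    · exact hw0 y h
    · exact le_refl 0
  · intro y hy; simp [hy]
  · have h1 : ∀ y ∈ F, (if y ∈ F then w y else 0) = w y := fun y hy => by simp [hy]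
    rw [Finset.sum_congr rfl h1]
    exact hw1
  · have h2 : ∀ y ∈ F, (if y ∈ F then w y else 0) • y = w y • y := fun y hy => by simp [hy]
    rw [Finset.sum_congr rfl h2]
    exact hwx

-- Step C: for e in E, a convex combination of points of E summing to 0 with positive weight on e
lemma aux_key {X : Type*} [NormedAddCommGroup X] [NormedSpace ℝ X] {E : Set X}
    {ε : ℝ} (hε : 0 < ε)
    (hball : ∀ x : X, x ∈ Submodule.span ℝ E → ‖x‖ < ε → x ∈ convexHull ℝ E)
    {e : X} (heE : e ∈ E) :
    ∃ (F : Finset X) (w : X → ℝ), ↑F ⊆ E ∧ (∀ y, 0 ≤ w y) ∧ (∀ y ∉ F, w y = 0) ∧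
      e ∈ F ∧ 0 < w e ∧ ∑ y ∈ F, w y = 1 ∧ ∑ y ∈ F, w y • y = 0 := by
  classical
  have heV : e ∈ Submodule.span ℝ E := Submodule.subset_span heE
  set δ : ℝ := ε / (2 * (‖e‖ + 1)) with hδ
  have hδpos : 0 < δ := by positivity
  have hnorm : ‖(-δ) • e‖ < ε := by
    rw [norm_smul, norm_neg, Real.norm_eq_abs, abs_of_pos hδpos]
    have h1 : δ * ‖e‖ ≤ δ * (‖e‖ + 1) := by nlinarith [norm_nonneg e]
    have h2 : δ * (‖e‖ + 1) = ε / 2 := by rw [hδ]; field_simp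
    linarith
  have hmem : (-δ) • e ∈ convexHull ℝ E :=
    hball _ (Submodule.smul_mem _ _ heV) hnorm
  obtain ⟨F₀, u, hF₀E, hu0, huF, hu1, hux⟩ := aux_rep hmem
  have h1δ : (0:ℝ) < 1 + δ := by linarith
  refine ⟨insert e F₀, fun y => (1 + δ)⁻¹ * (u y + if y = e then δ else 0),
    ?_, ?_, ?_, Finset.mem_insert_self e F₀, ?_, ?_, ?_⟩
  · rw [Finset.coe_insert]
    exact Set.insert_subset heE hF₀E
  · intro y
    have : (0:ℝ) ≤ if y = e then δ else 0 := by split_ifs <;> [exact hδpos.le; rfl]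
    have := hu0 y
    positivity
  · intro y hy
    rw [Finset.mem_insert, not_or] at hy
    show (1 + δ)⁻¹ * (u y + if y = e then δ else 0) = 0
    rw [huF y hy.2, if_neg hy.1]
    ring
  · show 0 < (1 + δ)⁻¹ * (u e + if e = e then δ else 0)
    rw [if_pos rfl]
    have := hu0 e
    positivity
  · rw [← Finset.mul_sum, Finset.sum_add_distrib]
    rw [Finset.sum_insert_of_eq_zero_if_notMem (fun h => huF e h), hu1]
    rw [Finset.sum_ite_eq' (insert e F₀) e (fun _ => δ), if_pos (Finset.mem_insert_self e F₀)]
    field_simp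
  · have hrw : ∀ y ∈ insert e F₀, ((1 + δ)⁻¹ * (u y + if y = e then δ else 0)) • y
        = (1 + δ)⁻¹ • (u y • y + (if y = e then δ • y else 0)) := by
      intro y _
      split_ifs with h
      · subst h; rw [mul_smul, add_smul]
      · rw [add_zero, mul_smul, add_zero]
    rw [Finset.sum_congr rfl hrw, ← Finset.smul_sum, Finset.sum_add_distrib]
    rw [Finset.sum_insert_of_eq_zero_if_notMem (f := fun y => u y • y)
      (fun h => by simp [huF e h])]
    rw [hux]
    rw [Finset.sum_ite_eq' (insert e F₀) e (fun y => δ • y), if_pos (Finset.mem_insert_self e F₀)]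
    rw [neg_smul, neg_add_cancel, smul_zero]

-- Step B: a nonempty finite subset of E spanning span E
lemma aux_spanfinset {X : Type*} [NormedAddCommGroup X] [NormedSpace ℝ X] (E : Set X)
    [FiniteDimensional ℝ (Submodule.span ℝ E)] (hE : E.Nonempty) :
    ∃ S : Finset X, S.Nonempty ∧ ↑S ⊆ E ∧
      Submodule.span ℝ (↑S : Set X) = Submodule.span ℝ E := by
  classical
  obtain ⟨e₀, he₀⟩ := hE
  set V := Submodule.span ℝ E with hV
  set b := Module.finBasis ℝ V with hb
  have hbj : ∀ j, ∃ F : Finset X, ↑F ⊆ E ∧ (b j : X) ∈ Submodule.span ℝ (↑F : Set X) :=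
    fun j => Submodule.mem_span_finite_of_mem_span (b j).2
  choose Fb hFbE hFbmem using hbj
  refine ⟨insert e₀ (Finset.univ.biUnion Fb), ⟨e₀, Finset.mem_insert_self _ _⟩, ?_, ?_⟩
  · rw [Finset.coe_insert]
    refine Set.insert_subset he₀ ?_
    intro y hy
    rw [Finset.coe_biUnion] at hy
    obtain ⟨j, _, hj⟩ := Set.mem_iUnion₂.mp hy
    exact hFbE j hj
  · apply le_antisymm
    · apply Submodule.span_le.mpr
      intro y hy
      rcases Finset.mem_insert.mp hy with h | h
      · exact Submodule.subset_span (h ▸ he₀)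
      · obtain ⟨j, _, hj⟩ := Finset.mem_biUnion.mp h
        exact Submodule.subset_span (hFbE j hj)
    · have hVspan : V = Submodule.span ℝ (Set.range (fun j => (b j : X))) := by
        have h1 := b.span_eq
        have h2 := congrArg (Submodule.map V.subtype) h1
        rw [Submodule.map_span, Submodule.map_top, Submodule.range_subtype] at h2
        have h3 : (⇑V.subtype '' Set.range ⇑b) = Set.range (fun j => (b j : X)) := by
          rw [← Set.range_comp]; rfl
        rw [h3] at h2
        exact h2.symm
      conv_lhs => rw [hVspan]
      apply Submodule.span_le.mpr
      rintro _ ⟨j, rfl⟩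
      refine Submodule.span_mono ?_ (hFbmem j)
      intro y hy
      exact Finset.mem_insert_of_mem (Finset.mem_biUnion.mpr ⟨j, Finset.mem_univ j, hy⟩)

lemma aux_fwd {X : Type*} [NormedAddCommGroup X] [NormedSpace ℝ X] (E : Set X)
    [FiniteDimensional ℝ (Submodule.span ℝ E)]
    (h0 : (0:X) ∈ convexHull ℝ E) {ε : ℝ} (hε : 0 < ε)
    (hball : ∀ x : X, x ∈ Submodule.span ℝ E → ‖x‖ < ε → x ∈ convexHull ℝ E) :
    ∃ (m : ℕ) (z : Fin m → X) (t : Fin m → ℝ),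
        Module.finrank ℝ (Submodule.span ℝ E) + 1 ≤ m ∧
        (∀ i, z i ∈ E) ∧ (∀ i, 0 < t i) ∧
        ∑ i, t i • z i = 0 ∧ ∑ i, t i = 1 ∧
        Submodule.span ℝ (Set.range z) = Submodule.span ℝ E := by
  classical
  have hEne : E.Nonempty := convexHull_nonempty_iff.mp ⟨0, h0⟩
  obtain ⟨S, hSne, hSE, hSspan⟩ := aux_spanfinset E hEne
  -- key reps, made total
  have key : ∀ e : X, ∃ (F : Finset X) (w : X → ℝ), ↑F ⊆ E ∧ (∀ y, 0 ≤ w y) ∧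
      (∀ y ∉ F, w y = 0) ∧ (e ∈ S → e ∈ F ∧ 0 < w e) ∧
      ∑ y ∈ F, w y = 1 ∧ ∑ y ∈ F, w y • y = 0 := by
    intro e
    by_cases he : e ∈ S
    · obtain ⟨F, w, h1, h2, h3, h4, h5, h6, h7⟩ := aux_key hε hball (hSE he)
      exact ⟨F, w, h1, h2, h3, fun _ => ⟨h4, h5⟩, h6, h7⟩
    · obtain ⟨F, w, h1, h2, h3, h4, h5⟩ := aux_rep h0
      exact ⟨F, w, h1, h2, h3, fun h => absurd h he, h4, h5⟩
  choose F w hFE hw0 hwF hwS hw1 hwz using key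
  set k := S.card with hk
  have hkpos : 0 < k := Finset.card_pos.mpr hSne
  set T := S.biUnion F with hT
  set W : X → ℝ := fun y => (∑ e ∈ S, w e y) / k with hW
  have hFT : ∀ e ∈ S, F e ⊆ T := fun e he => Finset.subset_biUnion_of_mem F he
  have hTE : ↑T ⊆ E := by
    intro y hy
    obtain ⟨e, _, hye⟩ := Finset.mem_biUnion.mp hy
    exact hFE e hye
  have hW0 : ∀ y, 0 ≤ W y := by
    intro y
    apply div_nonneg _ (Nat.cast_nonneg k)
    exact Finset.sum_nonneg fun e _ => hw0 e y
  have hWT : ∀ y ∉ T, W y = 0 := by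
    intro y hy
    have : ∀ e ∈ S, w e y = 0 := by
      intro e he
      apply hwF
      intro hyF
      exact hy (hFT e he hyF)
    rw [hW]
    simp only
    rw [Finset.sum_congr rfl this, Finset.sum_const, smul_zero, zero_div]
  have hTsum1 : ∀ e ∈ S, ∑ y ∈ T, w e y = 1 := by
    intro e he
    rw [← hw1 e]
    exact (Finset.sum_subset (hFT e he) fun y _ hy => hwF e y hy).symm
  have hTsum0 : ∀ e ∈ S, ∑ y ∈ T, w e y • y = 0 := by
    intro e he
    rw [← hwz e]
    exact (Finset.sum_subset (hFT e he) fun y _ hy => by rw [hwF e y hy, zero_smul]).symm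
  have hW1 : ∑ y ∈ T, W y = 1 := by
    rw [hW]
    simp only
    rw [← Finset.sum_div, Finset.sum_comm]
    rw [Finset.sum_congr rfl hTsum1, Finset.sum_const, nsmul_eq_mul, mul_one]
    field_simp
    rfl
  have hWz : ∑ y ∈ T, W y • y = 0 := by
    have hrw : ∀ y ∈ T, W y • y = (k:ℝ)⁻¹ • ∑ e ∈ S, w e y • y := by
      intro y _
      rw [hW]
      simp only
      rw [div_eq_inv_mul, mul_smul, Finset.sum_smul]
    rw [Finset.sum_congr rfl hrw, ← Finset.smul_sum, Finset.sum_comm]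
    rw [Finset.sum_congr rfl hTsum0, Finset.sum_const, smul_zero, smul_zero]
  have hWS : ∀ e ∈ S, 0 < W e := by
    intro e he
    apply div_pos _ (by exact_mod_cast hkpos)
    exact Finset.sum_pos' (fun e' _ => hw0 e' e) ⟨e, he, (hwS e he).2⟩
  -- filter positives
  set P := T.filter (fun y => 0 < W y) with hP
  have hPE : ↑P ⊆ E := fun y hy => hTE (Finset.filter_subset _ _ hy)
  have hSP : S ⊆ P := by
    intro e he
    rw [hP, Finset.mem_filter]
    exact ⟨hFT e he (hwS e he).1, hWS e he⟩
  have hPpos : ∀ y ∈ P, 0 < W y := fun y hy => (Finset.mem_filter.mp hy).2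
  have hzero : ∀ y ∈ T, y ∉ P → W y = 0 := by
    intro y hy hyP
    by_contra h
    exact hyP (Finset.mem_filter.mpr ⟨hy, lt_of_le_of_ne (hW0 y) (Ne.symm h)⟩)
  have hP1 : ∑ y ∈ P, W y = 1 := by
    rw [← hW1]
    exact Finset.sum_subset (Finset.filter_subset _ _) hzero
  have hPz : ∑ y ∈ P, W y • y = 0 := by
    rw [← hWz]
    exact Finset.sum_subset (f := fun y => W y • y) (Finset.filter_subset _ _)
      fun y hy hyP => by show W y • y = 0; rw [hzero y hy hyP, zero_smul]
  have hPspan : Submodule.span ℝ (↑P : Set X) = Submodule.span ℝ E := by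
    apply le_antisymm
    · exact Submodule.span_le.mpr fun y hy => Submodule.subset_span (hPE hy)
    · rw [← hSspan]
      exact Submodule.span_mono (by exact_mod_cast hSP)
  -- enumerate
  set m := P.card with hm
  have hmpos : 0 < m := Finset.card_pos.mpr (hSne.mono hSP)
  set σ := P.equivFin with hσ
  set z : Fin m → X := fun i => (σ.symm i : X) with hz
  set t : Fin m → ℝ := fun i => W (σ.symm i) with ht
  have hrange : Set.range z = ↑P := by
    ext y
    constructor
    · rintro ⟨i, rfl⟩
      exact (σ.symm i).2
    · intro hy
      exact ⟨σ ⟨y, hy⟩, by rw [hz]; simp⟩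
  have hsum : ∀ f : X → ℝ, ∑ i, f (z i) = ∑ y ∈ P, f y := by
    intro f
    rw [hz]
    simp only
    rw [Equiv.sum_comp σ.symm (fun a => f ↑a)]
    exact Finset.sum_coe_sort P f
  have hsumv : ∀ f : X → X, ∑ i, f (z i) = ∑ y ∈ P, f y := by
    intro f
    rw [hz]
    simp only
    rw [Equiv.sum_comp σ.symm (fun a => f ↑a)]
    exact Finset.sum_coe_sort P f
  have hzE : ∀ i, z i ∈ E := fun i => hPE (σ.symm i).2
  have htpos : ∀ i, 0 < t i := fun i => hPpos _ (σ.symm i).2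
  have ht1 : ∑ i, t i = 1 := by rw [ht]; simp only; rw [hsum W]; exact hP1
  have htz : ∑ i, t i • z i = 0 := by
    have := hsumv (fun y => W y • y)
    rw [ht, hz]
    simp only
    rw [this]
    exact hPz
  have hzspan : Submodule.span ℝ (Set.range z) = Submodule.span ℝ E := by
    rw [hrange]; exact hPspan
  -- cardinality
  set n := Module.finrank ℝ (Submodule.span ℝ E) with hn
  have hnm : n ≤ m := by
    have := finrank_range_le_card (R := ℝ) z
    simp only [Set.finrank] at this
    rw [hzspan] at this
    simpa using this
  have hne : n ≠ m := by
    intro heq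
    have hzV : ∀ i, z i ∈ Submodule.span ℝ E := fun i => Submodule.subset_span (hzE i)
    set z' : Fin m → Submodule.span ℝ E := fun i => ⟨z i, hzV i⟩ with hz'
    have hspan' : ⊤ ≤ Submodule.span ℝ (Set.range z') := by
      have h2 : Submodule.map (Submodule.span ℝ E).subtype (Submodule.span ℝ (Set.range z'))
          = Submodule.map (Submodule.span ℝ E).subtype ⊤ := by
        rw [Submodule.map_span, Submodule.map_top, Submodule.range_subtype]
        rw [← Set.range_comp]
        have : ((Submodule.span ℝ E).subtype ∘ z') = z := rfl
        rw [this, hzspan]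
      exact le_of_eq (Submodule.map_injective_of_injective
        (Submodule.injective_subtype _) h2).symm
    have hcard : Fintype.card (Fin m) = Module.finrank ℝ (Submodule.span ℝ E) := by
      simp [← heq, hn]
    have hli := linearIndependent_of_top_le_span_of_card_eq_finrank hspan' hcard
    have hzero' : ∑ i, t i • z' i = 0 := by
      apply Subtype.ext
      push_cast
      exact htz
    have := Fintype.linearIndependent_iff.mp hli t hzero' ⟨0, hmpos⟩
    exact (htpos ⟨0, hmpos⟩).ne' this
  refine ⟨m, z, t, ?_, hzE, htpos, htz, ht1, hzspan⟩
  omega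

/-- Carathéodory: For a normed space `X` and `E ⊆ X` with finite-dimensional
span, `0 ∈ ri (co E)` iff there exist `m ≥ dim span E + 1`, points `zⁱ ∈ E` and weights
`tⁱ > 0` with `∑ tⁱ zⁱ = 0`, `∑ tⁱ = 1`, and `span {z¹,…,zᵐ} = span E`. -/
theorem stmt3 {X : Type*} [NormedAddCommGroup X] [NormedSpace ℝ X] (E : Set X)
    [FiniteDimensional ℝ (Submodule.span ℝ E)] :
    (0 : X) ∈ intrinsicInterior ℝ (convexHull ℝ E) ↔
      ∃ (m : ℕ) (z : Fin m → X) (t : Fin m → ℝ),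
        Module.finrank ℝ (Submodule.span ℝ E) + 1 ≤ m ∧
        (∀ i, z i ∈ E) ∧ (∀ i, 0 < t i) ∧
        ∑ i, t i • z i = 0 ∧ ∑ i, t i = 1 ∧
        Submodule.span ℝ (Set.range z) = Submodule.span ℝ E := by
  rw [aux_ri_iff]
  constructor
  · rintro ⟨h0, ε, hε, hball⟩
    exact aux_fwd E h0 hε hball
  · rintro ⟨m, z, t, hm, hzE, ht, hsum0, hsum1, hspan⟩
    have h0 : (0 : X) ∈ convexHull ℝ E :=
      mem_convexHull_of_exists_fintype t z (fun i => (ht i).le) hsum1 hzE hsum0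
    exact ⟨h0, aux_rev E (by omega) z t hzE ht hsum0 hsum1 hspan⟩
end
end

section
/- Let Ω ⊆ R^n be open and bounded and F ⊆ R^n. There exists u ∈ W_0^{1,∞}(Ω) with Du ∈ F almost everywhere in Ω if and only if 0 ∈ F ∪ int(co F). Moreover, when 0 ∈ int(co F), u can be chosen with u ≥ 0 and ∫_Ω u > 0. -/
noncomputable section
open Matrix MeasureTheory

/-- The (a.e. defined) gradient of a scalar function `u : ℝⁿ → ℝ`. -/
def grad {n : ℕ} (u : (Fin n → ℝ) → ℝ) (x : Fin n → ℝ) : Fin n → ℝ :=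
  fun j => fderiv ℝ u x (Pi.single j 1)

open Set Filter Topology

namespace Stmt8

variable {n : ℕ}

def dotL (v : Fin n → ℝ) : (Fin n → ℝ) →L[ℝ] ℝ :=
  ∑ j, v j • ContinuousLinearMap.proj j

lemma dotL_apply (v x : Fin n → ℝ) : dotL v x = ∑ j, v j * x j := by
  simp [dotL]

lemma grad_eq_of_hasFDerivAt {u : (Fin n → ℝ) → ℝ} {v : Fin n → ℝ} {x : Fin n → ℝ}
    (h : HasFDerivAt u (dotL v) x) : grad u x = v := by
  funext j
  rw [grad, h.fderiv, dotL_apply]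
  rw [Finset.sum_eq_single j (fun i _ hi => by simp [Pi.single_eq_of_ne hi]) (by simp)]
  simp

lemma clm_eq_dotL (f : (Fin n → ℝ) →L[ℝ] ℝ) (x : Fin n → ℝ) :
    f x = dotL (fun j => f (Pi.single j 1)) x := by
  rw [dotL_apply]
  conv_lhs => rw [← Finset.univ_sum_single x]
  rw [map_sum]
  congr 1; funext j
  have h1 : Pi.single j (x j) = x j • (Pi.single j (1:ℝ) : Fin n → ℝ) := by
    funext i
    rcases eq_or_ne i j with rfl | h
    · simp
    · simp [Pi.single_eq_of_ne h]
  rw [h1, f.map_smul, smul_eq_mul, mul_comm]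

lemma lm_eq_dotL (f : (Fin n → ℝ) →ₗ[ℝ] ℝ) (x : Fin n → ℝ) :
    f x = dotL (fun j => f (Pi.single j 1)) x := by
  rw [dotL_apply]
  conv_lhs => rw [← Finset.univ_sum_single x]
  rw [map_sum]
  congr 1; funext j
  have h1 : Pi.single j (x j) = x j • (Pi.single j (1:ℝ) : Fin n → ℝ) := by
    funext i
    rcases eq_or_ne i j with rfl | h
    · simp
    · simp [Pi.single_eq_of_ne h]
  rw [h1, f.map_smul, smul_eq_mul, mul_comm]

lemma dotL_self_pos {v : Fin n → ℝ} (hv : v ≠ 0) : 0 < dotL v v := by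
  rw [dotL_apply]
  have : ∃ j, v j ≠ 0 := by
    by_contra h; push_neg at h; exact hv (funext h)
  obtain ⟨j, hj⟩ := this
  have : ∀ i ∈ Finset.univ, 0 ≤ v i * v i := fun i _ => mul_self_nonneg _
  calc (0:ℝ) < v j * v j := mul_self_pos.2 hj
    _ ≤ ∑ i, v i * v i := Finset.single_le_sum this (Finset.mem_univ j)



lemma dotL_sub_left {n : ℕ} (v v' y : Fin n → ℝ) : dotL (v - v') y = dotL v y - dotL v' y := by
  rw [dotL_apply, dotL_apply, dotL_apply, ← Finset.sum_sub_distrib]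
  apply Finset.sum_congr rfl
  intro j _
  rw [Pi.sub_apply]
  ring

lemma lip_deriv_nonpos_le {g : ℝ → ℝ} {K : NNReal} (hg : LipschitzWith K g) {a b : ℝ}
    (hab : a ≤ b) (hd : ∀ᵐ τ, τ ∈ Set.Ioo a b → deriv g τ ≤ 0) : g b ≤ g a := by
  rcases eq_or_lt_of_le hab with rfl | hlt
  · exact le_refl _
  by_cases hK0 : (K:ℝ) = 0
  · have := hg.dist_le_mul a b
    rw [hK0, zero_mul, dist_le_zero] at this
    exact le_of_eq (by rw [← this])  -- dist (g a) (g b) ≤ 0 → g a = g b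
  have hKpos : (0:ℝ) < K := lt_of_le_of_ne K.coe_nonneg (Ne.symm hK0)
  have hgc : Continuous g := hg.continuous
  set h : ℕ → ℝ := fun k => 1/(k+1) with hh
  have hh0 : ∀ k, 0 < h k := fun k => by positivity
  have hhlim : Tendsto h atTop (𝓝 0) := tendsto_one_div_add_atTop_nhds_zero_nat
  set p : ℕ → ℝ → ℝ := fun k τ => (g τ - g (τ + h k)) / h k + K with hp
  have hpc : ∀ k, Continuous (p k) := by
    intro k
    exact ((hgc.sub (hgc.comp (continuous_id.add continuous_const))).div_const _).add
      continuous_const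
  have hpnn : ∀ k τ, 0 ≤ p k τ := by
    intro k τ
    have hb := hg.dist_le_mul τ (τ + h k)
    rw [Real.dist_eq, Real.dist_eq] at hb
    have h1 : |g τ - g (τ + h k)| ≤ K * h k := by
      have : |τ - (τ + h k)| = h k := by
        rw [abs_sub_comm]; simp [abs_of_pos (hh0 k)]
      rwa [this] at hb
    have h2 : -(K * h k) ≤ g τ - g (τ + h k) := (abs_le.1 h1).1
    have : -(K:ℝ) ≤ (g τ - g (τ + h k)) / h k := by
      rw [le_div_iff₀ (hh0 k)]
      linarith
    show 0 ≤ (g τ - g (τ + h k)) / h k + (K:ℝ)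
    linarith
  -- pointwise liminf lower bound
  have h_ae : ∀ᵐ τ ∂(volume.restrict (Ioo a b)),
      ENNReal.ofReal K ≤ atTop.liminf (fun k => ENNReal.ofReal (p k τ)) := by
    have hdiff : ∀ᵐ τ ∂(volume : Measure ℝ), DifferentiableAt ℝ g τ :=
      hg.ae_differentiableAt
    filter_upwards [ae_restrict_of_ae hdiff, ae_restrict_of_ae hd,
      ae_restrict_mem measurableSet_Ioo] with τ hdt hdu hmem
    have hderiv : deriv g τ ≤ 0 := hdu hmem
    have hda : HasDerivAt g (deriv g τ) τ := hdt.hasDerivAt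
    have hslope := hasDerivAt_iff_tendsto_slope.1 hda
    have hseq : Tendsto (fun k => τ + h k) atTop (𝓝[≠] τ) := by
      apply tendsto_nhdsWithin_of_tendsto_nhds_of_eventually_within
      · have : Tendsto (fun k => τ + h k) atTop (𝓝 (τ + 0)) :=
          tendsto_const_nhds.add hhlim
        simpa using this
      · exact Eventually.of_forall (fun k => by
          simp only [mem_compl_iff, mem_singleton_iff]
          have := hh0 k; intro hcon; nlinarith [hh0 k])
    have hslope2 : Tendsto (fun k => slope g τ (τ + h k)) atTop (𝓝 (deriv g τ)) :=
      hslope.comp hseq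
    have hsl_eq : ∀ k, slope g τ (τ + h k) = (g (τ + h k) - g τ) / h k := by
      intro k
      rw [slope_def_field]
      congr 1
      ring
    have hptend : Tendsto (fun k => p k τ) atTop (𝓝 (-(deriv g τ) + K)) := by
      have : Tendsto (fun k => -(slope g τ (τ + h k)) + K) atTop
          (𝓝 (-(deriv g τ) + K)) := (hslope2.neg).add tendsto_const_nhds
      apply this.congr
      intro k
      rw [hsl_eq k, hp]
      simp only [neg_div]
      ring_nf
    have hofr : Tendsto (fun k => ENNReal.ofReal (p k τ)) atTop
        (𝓝 (ENNReal.ofReal (-(deriv g τ) + K))) :=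
      (ENNReal.continuous_ofReal.tendsto _).comp hptend
    rw [hofr.liminf_eq]
    apply ENNReal.ofReal_le_ofReal
    linarith
  -- Fatou
  have hmeas : ∀ k, Measurable (fun τ => ENNReal.ofReal (p k τ)) := fun k =>
    (hpc k).measurable.ennreal_ofReal
  have fatou := lintegral_liminf_le (μ := volume.restrict (Ioo a b)) (u := atTop) hmeas
  have lhs_lb : ENNReal.ofReal ((K:ℝ) * (b - a)) ≤
      ∫⁻ τ in Ioo a b, atTop.liminf (fun k => ENNReal.ofReal (p k τ)) := by
    calc ENNReal.ofReal ((K:ℝ) * (b - a))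
        = ENNReal.ofReal K * ENNReal.ofReal (b - a) :=
          ENNReal.ofReal_mul K.coe_nonneg
      _ = ENNReal.ofReal K * volume (Ioo a b) := by rw [Real.volume_Ioo]
      _ = ∫⁻ _ in Ioo a b, ENNReal.ofReal K := (setLIntegral_const _ _).symm
      _ ≤ _ := lintegral_mono_ae h_ae
  -- upper bound for each integral
  have hint : ∀ k, IntegrableOn (p k) (Ioo a b) volume := fun k =>
    ((hpc k).continuousOn.integrableOn_compact isCompact_Icc).mono_set
      Ioo_subset_Icc_self
  have int_ub : ∀ k, ∫ τ in Ioo a b, p k τ ≤ g a - g b + 2*K*(h k) + K*(b-a) := by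
    intro k
    have hIoc : ∫ τ in Ioo a b, p k τ = ∫ τ in a..b, p k τ := by
      rw [intervalIntegral.integral_of_le hab, integral_Ioc_eq_integral_Ioo]
    have ig : IntervalIntegrable g volume a b := hgc.intervalIntegrable a b
    have igh : IntervalIntegrable (fun τ => g (τ + h k)) volume a b :=
      (hgc.comp (continuous_id.add continuous_const)).intervalIntegrable a b
    have isub : IntervalIntegrable (fun τ => (g τ - g (τ + h k))/(h k)) volume a b :=
      ((hgc.sub (hgc.comp (continuous_id.add continuous_const))).div_const
        _).intervalIntegrable a b
    have hsplit : ∫ τ in a..b, p k τ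
        = (∫ τ in a..b, (g τ - g (τ + h k))) / h k + K * (b - a) := by
      rw [hp]
      rw [intervalIntegral.integral_add isub (intervalIntegrable_const (c := (K:ℝ)))]
      rw [intervalIntegral.integral_div, intervalIntegral.integral_const, smul_eq_mul]
      ring
    have hshift : ∫ τ in a..b, g (τ + h k) = ∫ τ in a+h k..b+h k, g τ :=
      intervalIntegral.integral_comp_add_right g (h k)
    have hdiffint : ∫ τ in a..b, (g τ - g (τ + h k))
        = (∫ τ in a..a+h k, g τ) - (∫ τ in b..b+h k, g τ) := by
      rw [intervalIntegral.integral_sub ig igh, hshift]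
      have h1 : (∫ τ in a..a + h k, g τ) + ∫ τ in a + h k..b + h k, g τ
          = ∫ τ in a..b + h k, g τ :=
        intervalIntegral.integral_add_adjacent_intervals
          (hgc.intervalIntegrable _ _) (hgc.intervalIntegrable _ _)
      have h2 : (∫ τ in a..b, g τ) + ∫ τ in b..b + h k, g τ
          = ∫ τ in a..b + h k, g τ :=
        intervalIntegral.integral_add_adjacent_intervals
          (hgc.intervalIntegrable _ _) (hgc.intervalIntegrable _ _)
      linarith
    have key : ∀ c : ℝ, |(∫ τ in c..c + h k, g τ) - (h k) * g c| ≤ K * (h k)^2 := by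
      intro c
      have hle : c ≤ c + h k := by linarith [hh0 k]
      have hbd : ∀ x ∈ Set.uIoc c (c + h k), ‖g x - g c‖ ≤ K * h k := by
        intro x hx
        rw [Set.uIoc_of_le hle] at hx
        have := hg.dist_le_mul x c
        rw [Real.dist_eq, Real.dist_eq] at this
        have hxc : |x - c| ≤ h k := by
          rw [abs_of_pos (by linarith [hx.1] : (0:ℝ) < x - c)]
          linarith [hx.2]
        calc ‖g x - g c‖ = |g x - g c| := rfl
          _ ≤ K * |x - c| := this
          _ ≤ K * h k := by nlinarith [hxc, K.coe_nonneg]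
      have := intervalIntegral.norm_integral_le_of_norm_le_const hbd
      have heq : ∫ τ in c..c + h k, (g τ - g c) = (∫ τ in c..c + h k, g τ) - h k * g c := by
        rw [intervalIntegral.integral_sub (hgc.intervalIntegrable _ _)
          (intervalIntegrable_const), intervalIntegral.integral_const, smul_eq_mul]
        ring
      rw [heq] at this
      have habs : |c + h k - c| = h k := by simp [abs_of_pos (hh0 k)]
      calc |(∫ τ in c..c + h k, g τ) - h k * g c| ≤ K * h k * |c + h k - c| := this
        _ = K * (h k)^2 := by rw [habs]; ring
    have k1 := key a
    have k2 := key b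
    have e1 := (abs_le.1 k1).2
    have e2 := (abs_le.1 k2).1
    have hdiff_le : ∫ τ in a..b, (g τ - g (τ + h k))
        ≤ h k * g a - h k * g b + 2*K*(h k)^2 := by
      rw [hdiffint]; linarith
    rw [hIoc, hsplit]
    have hdivle : (∫ τ in a..b, (g τ - g (τ + h k))) / h k
        ≤ g a - g b + 2*K*(h k) := by
      rw [div_le_iff₀ (hh0 k)]
      calc ∫ τ in a..b, (g τ - g (τ + h k)) ≤ h k * g a - h k * g b + 2*K*(h k)^2 := hdiff_le
        _ = (g a - g b + 2*K*(h k)) * h k := by ring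
    linarith
  have rhs_ub : atTop.liminf (fun k => ∫⁻ τ in Ioo a b, ENNReal.ofReal (p k τ))
      ≤ ENNReal.ofReal (g a - g b + K*(b-a)) := by
    have heach : ∀ k, (∫⁻ τ in Ioo a b, ENNReal.ofReal (p k τ))
        ≤ ENNReal.ofReal (g a - g b + 2*K*(h k) + K*(b-a)) := by
      intro k
      have := ofReal_integral_eq_lintegral_ofReal (hint k)
        (Eventually.of_forall (fun τ => hpnn k τ))
      rw [← this]
      exact ENNReal.ofReal_le_ofReal (int_ub k)
    have htnd : Tendsto (fun k => ENNReal.ofReal (g a - g b + 2*K*(h k) + K*(b-a)))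
        atTop (𝓝 (ENNReal.ofReal (g a - g b + K*(b-a)))) := by
      have : Tendsto (fun k => g a - g b + 2*K*(h k) + K*(b-a)) atTop
          (𝓝 (g a - g b + K*(b-a))) := by
        have h1 := (hhlim.const_mul (2*(K:ℝ))).const_add (g a - g b)
        have h2 := h1.add_const ((K:ℝ)*(b-a))
        have heq : (fun k : ℕ => g a - g b + 2*(K:ℝ) * h k + (K:ℝ)*(b-a))
            = fun k : ℕ => g a - g b + 2*(K:ℝ) * (1/((k:ℝ)+1)) + (K:ℝ)*(b-a) := rfl
        rw [heq]
        simpa [one_div, hh] using h2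
      exact (ENNReal.continuous_ofReal.tendsto _).comp this
    calc atTop.liminf (fun k => ∫⁻ τ in Ioo a b, ENNReal.ofReal (p k τ))
        ≤ atTop.liminf (fun k => ENNReal.ofReal (g a - g b + 2*K*(h k) + K*(b-a))) :=
          liminf_le_liminf (Eventually.of_forall heach)
      _ = ENNReal.ofReal (g a - g b + K*(b-a)) := htnd.liminf_eq
  have main : ENNReal.ofReal ((K:ℝ) * (b - a)) ≤ ENNReal.ofReal (g a - g b + K*(b-a)) :=
    le_trans lhs_lb (le_trans fatou rhs_ub)
  rcases (ENNReal.ofReal_le_ofReal_iff' ).1 main with hcase | hcase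
  · linarith
  · nlinarith [hKpos, hlt]


lemma line_zero {g : ℝ → ℝ} {K : NNReal} (hg : LipschitzWith K g) {A : Set ℝ}
    (hAo : IsOpen A) (hAb : Bornology.IsBounded A) (hz : ∀ t ∉ A, g t = 0)
    (hd : ∀ᵐ τ, τ ∈ A → deriv g τ ≤ 0) (t : ℝ) : g t = 0 := by
  by_contra hgt
  have htA : t ∈ A := by
    by_contra h; exact hgt (hz t h)
  obtain ⟨R, hR⟩ := hAb.exists_norm_le
  have hRt : |t| ≤ R := hR t htA
  have habs := abs_le.1 hRt
  -- right endpoint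
  have hbne : (Aᶜ ∩ Ici t).Nonempty := by
    refine ⟨R + 1, fun hmem => ?_, by rw [mem_Ici]; linarith [habs.2]⟩
    have h1 := hR _ hmem
    rw [Real.norm_eq_abs] at h1
    linarith [le_trans (le_abs_self _) h1]
  have hbbdd : BddBelow (Aᶜ ∩ Ici t) := ⟨t, fun x hx => hx.2⟩
  have hbcl : IsClosed (Aᶜ ∩ Ici t) := (hAo.isClosed_compl).inter isClosed_Ici
  set b := sInf (Aᶜ ∩ Ici t) with hbdef
  have hbmem : b ∈ Aᶜ ∩ Ici t := hbcl.csInf_mem hbne hbbdd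
  have htb : t < b := lt_of_le_of_ne hbmem.2 (fun h => hbmem.1 (h ▸ htA))
  have hIco : Ico t b ⊆ A := by
    intro s hs
    by_contra hsA
    exact absurd (csInf_le hbbdd ⟨hsA, hs.1⟩) (not_le.2 hs.2)
  -- left endpoint
  have hane : (Aᶜ ∩ Iic t).Nonempty := by
    refine ⟨-(R + 1), fun hmem => ?_, by rw [mem_Iic]; linarith [habs.1]⟩
    have h1 := hR _ hmem
    rw [Real.norm_eq_abs, abs_neg] at h1
    linarith [le_trans (le_abs_self _) h1]
  have habdd : BddAbove (Aᶜ ∩ Iic t) := ⟨t, fun x hx => hx.2⟩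
  have hacl : IsClosed (Aᶜ ∩ Iic t) := (hAo.isClosed_compl).inter isClosed_Iic
  set a := sSup (Aᶜ ∩ Iic t) with hadef
  have hamem : a ∈ Aᶜ ∩ Iic t := hacl.csSup_mem hane habdd
  have hat : a < t := lt_of_le_of_ne hamem.2 (fun h => hamem.1 (h ▸ htA))
  have hIoc : Ioc a t ⊆ A := by
    intro s hs
    by_contra hsA
    exact absurd (le_csSup habdd ⟨hsA, hs.2⟩) (not_le.2 hs.1)
  have hIoo : Ioo a b ⊆ A := by
    intro s hs
    rcases le_or_gt s t with h | h
    · exact hIoc ⟨hs.1, h⟩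
    · exact hIco ⟨h.le, hs.2⟩
  -- monotone decreasing on (a, b)
  have hmono : ∀ s₁ s₂, a < s₁ → s₁ ≤ s₂ → s₂ < b → g s₂ ≤ g s₁ := by
    intro s₁ s₂ h1 h2 h3
    refine lip_deriv_nonpos_le hg h2 ?_
    filter_upwards [hd] with τ hτ hmem
    exact hτ (hIoo ⟨lt_trans h1 hmem.1, lt_trans hmem.2 h3⟩)
  -- sequences approaching the endpoints
  have hseq : Tendsto (fun k : ℕ => 1/((k:ℝ)+2)) atTop (𝓝 0) := by
    have := (tendsto_one_div_add_atTop_nhds_zero_nat (𝕜 := ℝ)).comp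
      (tendsto_add_atTop_nat 1)
    convert this using 2 with k
    simp [Function.comp]
    push_cast; ring
  have hposseq : ∀ k : ℕ, 0 < 1/((k:ℝ)+2) ∧ 1/((k:ℝ)+2) ≤ 1/2 := by
    intro k
    constructor
    · positivity
    · rw [div_le_div_iff₀ (by positivity) (by norm_num)]
      have : (0:ℝ) ≤ (k:ℝ) := Nat.cast_nonneg k
      linarith
  -- g t ≤ 0
  have hle : g t ≤ 0 := by
    have htnd : Tendsto (fun k : ℕ => g (a + (t-a) * (1/((k:ℝ)+2)))) atTop (𝓝 (g a)) := by
      have h1 : Tendsto (fun k : ℕ => a + (t-a) * (1/((k:ℝ)+2))) atTop (𝓝 a) := by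
        have := (hseq.const_mul (t-a)).const_add a
        simpa using this
      exact (hg.continuous.tendsto a).comp h1
    have hga : g a = 0 := hz a hamem.1
    rw [hga] at htnd
    refine ge_of_tendsto' htnd (fun k => ?_)
    have hk := hposseq k
    have hs1 : a < a + (t-a) * (1/((k:ℝ)+2)) := by nlinarith [hk.1]
    have hs2 : a + (t-a) * (1/((k:ℝ)+2)) ≤ t := by nlinarith [hk.1, hk.2]
    exact hmono _ t hs1 hs2 htb
  -- 0 ≤ g t
  have hge : 0 ≤ g t := by
    have htnd : Tendsto (fun k : ℕ => g (b - (b-t) * (1/((k:ℝ)+2)))) atTop (𝓝 (g b)) := by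
      have h1 : Tendsto (fun k : ℕ => b - (b-t) * (1/((k:ℝ)+2))) atTop (𝓝 b) := by
        have h0 := ((hseq.const_mul (b-t)).const_sub b :)
        simpa using h0
      exact (hg.continuous.tendsto b).comp h1
    have hgb : g b = 0 := hz b hbmem.1
    rw [hgb] at htnd
    refine le_of_tendsto' htnd (fun k => ?_)
    have hk := hposseq k
    have hs1 : t ≤ b - (b-t) * (1/((k:ℝ)+2)) := by nlinarith [hk.1, hk.2]
    have hs2 : b - (b-t) * (1/((k:ℝ)+2)) < b := by nlinarith [hk.1]
    exact hmono t _ hat hs1 hs2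
  exact hgt (le_antisymm hle hge)


section Main
variable {n : ℕ}

lemma slice_ae {n : ℕ} {N : Set (Fin n → ℝ)} (hN : volume N = 0) (ξ : Fin n → ℝ) :
    ∀ᵐ x ∂(volume : Measure (Fin n → ℝ)), ∀ᵐ t ∂(volume : Measure ℝ),
      x + t • ξ ∉ N := by
  obtain ⟨N', hNN', hN'm, hN'0⟩ := exists_measurable_superset_of_null hN
  set E2 : Set (ℝ × (Fin n → ℝ)) := {p | p.2 + p.1 • ξ ∈ N'} with hE2def
  have hcont2 : Continuous fun p : ℝ × (Fin n → ℝ) => p.2 + p.1 • ξ :=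
    continuous_snd.add (continuous_fst.smul continuous_const)
  have hE2m : MeasurableSet E2 := hcont2.measurable hN'm
  have hslices : ∀ t : ℝ, (volume : Measure (Fin n → ℝ)) (Prod.mk t ⁻¹' E2) = 0 := by
    intro t
    have heq : (Prod.mk t ⁻¹' E2) = (fun x : Fin n → ℝ => x + t • ξ) ⁻¹' N' := rfl
    rw [heq, measure_preimage_add_right]
    exact hN'0
  have hE2 : (((volume : Measure ℝ)).prod (volume : Measure (Fin n → ℝ))) E2 = 0 := by
    rw [Measure.measure_prod_null hE2m]
    exact Eventually.of_forall hslices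
  set E1 : Set ((Fin n → ℝ) × ℝ) := {p | p.1 + p.2 • ξ ∈ N'} with hE1def
  have hE1m : MeasurableSet E1 := by
    have hcont1 : Continuous fun p : (Fin n → ℝ) × ℝ => p.1 + p.2 • ξ :=
      continuous_fst.add (continuous_snd.smul continuous_const)
    exact hcont1.measurable hN'm
  have hE1 : (((volume : Measure (Fin n → ℝ))).prod (volume : Measure ℝ)) E1 = 0 := by
    have hswap := Measure.prod_swap (μ := (volume : Measure ℝ))
      (ν := (volume : Measure (Fin n → ℝ)))
    have : ((volume : Measure (Fin n → ℝ)).prod (volume : Measure ℝ)) E1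
        = (((volume : Measure ℝ)).prod (volume : Measure (Fin n → ℝ))) (Prod.swap ⁻¹' E1) := by
      rw [← hswap, Measure.map_apply measurable_swap hE1m]
    rw [this]
    have : (Prod.swap ⁻¹' E1 : Set (ℝ × (Fin n → ℝ))) = E2 := rfl
    rw [this]
    exact hE2
  have hae : ∀ᵐ p ∂(((volume : Measure (Fin n → ℝ))).prod (volume : Measure ℝ)), p ∉ E1 :=
    measure_eq_zero_iff_ae_notMem.1 hE1
  have := Measure.ae_ae_of_ae_prod hae
  filter_upwards [this] with x hx
  filter_upwards [hx] with t ht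
  exact fun hmem => ht (hNN' hmem)


lemma dotL_comm (v x : Fin n → ℝ) : dotL v x = dotL x v := by
  rw [dotL_apply, dotL_apply]
  exact Finset.sum_congr rfl (fun j _ => mul_comm _ _)

lemma dotL_zero_left (x : Fin n → ℝ) : dotL (0 : Fin n → ℝ) x = 0 := by
  rw [dotL_apply]; simp

lemma dotL_neg_left (v x : Fin n → ℝ) : dotL (-v) x = -dotL v x := by
  rw [dotL_apply, dotL_apply, ← Finset.sum_neg_distrib]
  exact Finset.sum_congr rfl (fun j _ => by simp [neg_mul])

lemma forward (Ω : Set (Fin n → ℝ)) (hΩo : IsOpen Ω) (hΩb : Bornology.IsBounded Ω)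
    (hΩne : Ω.Nonempty) (F : Set (Fin n → ℝ))
    (u : (Fin n → ℝ) → ℝ) (C : NNReal) (hu : LipschitzWith C u) (hz : ∀ x ∉ Ω, u x = 0)
    (hae : ∀ᵐ x ∂(volume : Measure (Fin n → ℝ)), x ∈ Ω → grad u x ∈ F) :
    (0 : Fin n → ℝ) ∈ F ∪ interior (convexHull ℝ F) := by
  by_contra h0
  rw [Set.mem_union, not_or] at h0
  obtain ⟨h0F, h0I⟩ := h0
  have hΩpos : 0 < volume Ω := hΩo.measure_pos volume hΩne
  -- some point with gradient in F
  have hex : ∃ x, x ∈ Ω ∧ grad u x ∈ F := by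
    by_contra hc
    push_neg at hc
    have hsub : Ω ⊆ {x | ¬(x ∈ Ω → grad u x ∈ F)} := by
      intro x hx
      simp only [Set.mem_setOf_eq, Classical.not_imp]
      exact ⟨hx, hc x hx⟩
    have := measure_mono_null hsub (ae_iff.1 hae)
    exact absurd this (ne_of_gt hΩpos)
  obtain ⟨xF, hxFΩ, hxFF⟩ := hex
  have hFne : F.Nonempty := ⟨_, hxFF⟩
  have hconv : Convex ℝ (convexHull ℝ F) := convex_convexHull ℝ F
  -- separating functional
  have hsep : ∃ ξ : Fin n → ℝ, ξ ≠ 0 ∧ ∀ v ∈ F, dotL ξ v ≤ 0 := by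
    by_cases hint : (interior (convexHull ℝ F)).Nonempty
    · obtain ⟨f, hf⟩ := geometric_hahn_banach_open_point hconv.interior isOpen_interior h0I
      rw [map_zero] at hf
      obtain ⟨x₀, hx₀⟩ := hint
      have hfv : ∀ v ∈ F, f v ≤ 0 := by
        intro v hv
        have hvc : v ∈ closure (convexHull ℝ F) :=
          subset_closure (subset_convexHull ℝ F hv)
        have hseq : Tendsto (fun k : ℕ => (1/((k:ℝ)+1)) * f x₀ + (1 - 1/((k:ℝ)+1)) * f v)
            atTop (𝓝 (0 * f x₀ + (1 - 0) * f v)) := by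
          have h1 : Tendsto (fun k : ℕ => 1/((k:ℝ)+1)) atTop (𝓝 0) :=
            tendsto_one_div_add_atTop_nhds_zero_nat
          exact (h1.mul_const _).add ((tendsto_const_nhds.sub h1).mul_const _)
        have hle : ∀ k : ℕ, (1/((k:ℝ)+1)) * f x₀ + (1 - 1/((k:ℝ)+1)) * f v ≤ 0 := by
          intro k
          have hk1 : 0 < 1/((k:ℝ)+1) := by positivity
          have hk2 : 1/((k:ℝ)+1) ≤ 1 := by
            rw [div_le_one (by positivity)]
            linarith [Nat.cast_nonneg (α := ℝ) k]
          have hmem := hconv.combo_interior_closure_mem_interior hx₀ hvc hk1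
            (by linarith : (0:ℝ) ≤ 1 - 1/((k:ℝ)+1)) (by ring)
          have := hf _ hmem
          rw [map_add, _root_.map_smul, _root_.map_smul, smul_eq_mul, smul_eq_mul] at this
          linarith
        have := le_of_tendsto hseq (Eventually.of_forall hle)
        simpa using this
      set ξ : Fin n → ℝ := fun j => f (Pi.single j 1) with hξdef
      have hξv : ∀ v, dotL ξ v = f v := fun v => (clm_eq_dotL f v).symm
      refine ⟨ξ, ?_, fun v hv => by rw [hξv]; exact hfv v hv⟩
      intro hξ0
      have := hf x₀ hx₀
      rw [← hξv x₀, hξ0, dotL_zero_left] at this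
      exact absurd this (lt_irrefl _)
    · -- interior empty: affine span is proper
      have haff : affineSpan ℝ F ≠ ⊤ := by
        intro htop
        apply hint
        rw [hconv.interior_nonempty_iff_affineSpan_eq_top, affineSpan_convexHull]
        exact htop
      obtain ⟨p, hpF⟩ := hFne
      set W : Submodule ℝ (Fin n → ℝ) := vectorSpan ℝ F with hWdef
      have hW : W ≠ ⊤ := by
        intro htop
        apply haff
        rw [eq_top_iff]
        intro x _
        have hxp : (x - p) +ᵥ p ∈ affineSpan ℝ F := by
          apply AffineSubspace.vadd_mem_of_mem_direction
          · rw [direction_affineSpan]; rw [← hWdef, htop]; trivial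
          · exact subset_affineSpan ℝ F hpF
        simpa using hxp
      obtain ⟨φ, hφne, hφmap⟩ :=
        Submodule.exists_dual_map_eq_bot_of_lt_top (lt_top_iff_ne_top.2 hW) inferInstance
      have hφW : ∀ w ∈ W, φ w = 0 := by
        intro w hw
        have : φ w ∈ Submodule.map φ W := Submodule.mem_map_of_mem hw
        rw [hφmap] at this
        simpa using this
      have hφc : ∀ v ∈ F, φ v = φ p := by
        intro v hv
        have hvp : v - p ∈ W := by
          have := vsub_mem_vectorSpan ℝ hv hpF
          simpa using this
        have := hφW _ hvp
        rw [map_sub] at this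
        linarith
      set ξ₀ : Fin n → ℝ := fun j => φ (Pi.single j 1) with hξ₀def
      have hξ₀v : ∀ v, dotL ξ₀ v = φ v := fun v => (lm_eq_dotL φ v).symm
      have hξ₀ne : ξ₀ ≠ 0 := by
        intro hξ0
        apply hφne
        apply LinearMap.ext
        intro x
        rw [← hξ₀v x, hξ0, dotL_zero_left]
        simp
      rcases le_or_gt (φ p) 0 with hc | hc
      · exact ⟨ξ₀, hξ₀ne, fun v hv => by rw [hξ₀v, hφc v hv]; exact hc⟩
      · refine ⟨-ξ₀, neg_ne_zero.2 hξ₀ne, fun v hv => ?_⟩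
        rw [dotL_neg_left, hξ₀v, hφc v hv]
        linarith
  obtain ⟨ξ, hξne, hξF⟩ := hsep
  -- bad set
  set N : Set (Fin n → ℝ) :=
    {x | ¬(x ∈ Ω → DifferentiableAt ℝ u x ∧ grad u x ∈ F)} with hNdef
  have hN : volume N = 0 := by
    have h1 : ∀ᵐ x ∂(volume : Measure (Fin n → ℝ)),
        x ∈ Ω → DifferentiableAt ℝ u x ∧ grad u x ∈ F := by
      filter_upwards [hae, hu.ae_differentiableAt] with x h1 h2 hx
      exact ⟨h2, h1 hx⟩
    exact ae_iff.1 h1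
  have hξnorm : 0 < ‖ξ‖ := norm_pos_iff.2 hξne
  obtain ⟨R, hR⟩ := hΩb.exists_norm_le
  -- a.e. x : u x = 0
  have hu0ae : ∀ᵐ x ∂(volume : Measure (Fin n → ℝ)), u x = 0 := by
    filter_upwards [slice_ae hN ξ] with x hx
    set g : ℝ → ℝ := fun t => u (x + t • ξ) with hgdef
    have hline : LipschitzWith ‖ξ‖₊ (fun t : ℝ => x + t • ξ) := by
      apply LipschitzWith.of_dist_le_mul
      intro s t
      have : dist (x + s • ξ) (x + t • ξ) = ‖(s - t) • ξ‖ := by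
        rw [dist_eq_norm]
        congr 1
        module
      rw [this, norm_smul, Real.dist_eq]
      rw [Real.norm_eq_abs, coe_nnnorm, mul_comm]
    have hgL : LipschitzWith (C * ‖ξ‖₊) g := hu.comp hline
    set A : Set ℝ := {t | x + t • ξ ∈ Ω} with hAdef
    have hAo : IsOpen A := hΩo.preimage (by continuity)
    have hAb : Bornology.IsBounded A := by
      rw [Metric.isBounded_iff_subset_closedBall 0]
      refine ⟨(R + ‖x‖)/‖ξ‖, fun t ht => ?_⟩
      rw [Metric.mem_closedBall, Real.dist_eq, sub_zero]
      have h1 : ‖x + t • ξ‖ ≤ R := hR _ ht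
      have h2 : ‖t • ξ‖ ≤ R + ‖x‖ := by
        calc ‖t • ξ‖ = ‖(x + t • ξ) - x‖ := by congr 1; module
          _ ≤ ‖x + t • ξ‖ + ‖x‖ := norm_sub_le _ _
          _ ≤ R + ‖x‖ := by linarith
      rw [norm_smul, Real.norm_eq_abs] at h2
      rw [le_div_iff₀ hξnorm]
      exact h2
    have hgz : ∀ t ∉ A, g t = 0 := fun t ht => hz _ ht
    have hgd : ∀ᵐ t ∂(volume : Measure ℝ), t ∈ A → deriv g t ≤ 0 := by
      filter_upwards [hx] with t ht htA
      have hmem : x + t • ξ ∈ Ω := htA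
      have hgood : DifferentiableAt ℝ u (x + t • ξ) ∧ grad u (x + t • ξ) ∈ F := by
        by_contra hcon
        exact ht (by simp only [hNdef, Set.mem_setOf_eq, Classical.not_imp]; exact ⟨hmem, hcon⟩)
      obtain ⟨hdiff, hgradF⟩ := hgood
      have hcurve : HasDerivAt (fun t : ℝ => x + t • ξ) ξ t := by
        have h1 : HasDerivAt (fun t : ℝ => t • ξ) ((1:ℝ) • ξ) t :=
          (hasDerivAt_id t).smul_const ξ
        rw [one_smul] at h1
        exact h1.const_add x
      have hg' : HasDerivAt g (fderiv ℝ u (x + t • ξ) ξ) t :=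
        (hdiff.hasFDerivAt).comp_hasDerivAt t hcurve
      rw [hg'.deriv]
      have : fderiv ℝ u (x + t • ξ) ξ = dotL ξ (grad u (x + t • ξ)) := by
        rw [clm_eq_dotL (fderiv ℝ u (x + t • ξ)) ξ]
        exact dotL_comm _ _
      rw [this]
      exact hξF _ hgradF
    have := line_zero hgL hAo hAb hgz hgd 0
    rw [hgdef] at this
    simpa using this
  have hu0 : ∀ x, u x = 0 := by
    have : u = fun _ => (0:ℝ) := by
      rw [← hu.continuous.ae_eq_iff_eq volume continuous_const]
      exact hu0ae
    intro x; rw [this]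
  -- contradiction
  apply h0F
  have : grad u xF = 0 := by
    have hueq : u = fun _ => (0:ℝ) := funext hu0
    funext j
    rw [grad, hueq, fderiv_fun_const]
    simp
  rw [← this]
  exact hxFF


lemma exists_finset_ball_subset {n : ℕ} (hn : 0 < n) {F : Set (Fin n → ℝ)}
    (h0 : (0 : Fin n → ℝ) ∈ interior (convexHull ℝ F)) :
    ∃ (G : Finset (Fin n → ℝ)) (ρ : ℝ), ↑G ⊆ F ∧ G.Nonempty ∧ 0 < ρ ∧
      Metric.ball (0 : Fin n → ℝ) ρ ⊆ convexHull ℝ (↑G : Set (Fin n → ℝ)) := by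
  obtain ⟨ε, hε, hball⟩ := Metric.mem_nhds_iff.1 (mem_interior_iff_mem_nhds.1 h0)
  set q : Fin n → Bool → (Fin n → ℝ) :=
    fun i σ => (if σ then ε/2 else -(ε/2)) • (Pi.single i 1 : Fin n → ℝ) with hqdef
  have hqball : ∀ i σ, q i σ ∈ Metric.ball (0 : Fin n → ℝ) ε := by
    intro i σ
    rw [Metric.mem_ball, dist_zero_right, hqdef]
    rw [norm_smul, Pi.norm_single, norm_one, mul_one]
    cases σ <;> simp [abs_of_pos hε, abs_of_neg (by linarith : -(ε/2) < 0)] <;> linarith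
  have hqco : ∀ i σ, q i σ ∈ convexHull ℝ F := fun i σ => hball (hqball i σ)
  have hfin : ∀ i σ, ∃ T : Finset (Fin n → ℝ), ↑T ⊆ F ∧ q i σ ∈ convexHull ℝ (↑T : Set (Fin n → ℝ)) := by
    intro i σ
    have := hqco i σ
    rw [convexHull_eq_union_convexHull_finite_subsets] at this
    simp only [Set.mem_iUnion] at this
    obtain ⟨T, hT, hmem⟩ := this
    exact ⟨T, hT, hmem⟩
  choose T hTF hTmem using hfin
  set G : Finset (Fin n → ℝ) :=
    (Finset.univ : Finset (Fin n × Bool)).biUnion (fun p => T p.1 p.2) with hGdef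
  have hGF : ↑G ⊆ F := by
    intro x hx
    rw [hGdef] at hx
    simp only [Finset.coe_biUnion, Set.mem_iUnion, Finset.mem_coe] at hx
    obtain ⟨p, _, hp⟩ := hx
    exact hTF p.1 p.2 hp
  have hq_in_G : ∀ i σ, q i σ ∈ convexHull ℝ (↑G : Set (Fin n → ℝ)) := by
    intro i σ
    apply convexHull_mono _ (hTmem i σ)
    intro x hx
    rw [hGdef]
    simp only [Finset.coe_biUnion, Set.mem_iUnion, Finset.mem_coe]
    exact ⟨(i, σ), Finset.mem_univ _, hx⟩
  set i0 : Fin n := ⟨0, hn⟩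
  have hGconv : Convex ℝ (convexHull ℝ (↑G : Set (Fin n → ℝ))) := convex_convexHull ℝ _
  have h0G : (0 : Fin n → ℝ) ∈ convexHull ℝ (↑G : Set (Fin n → ℝ)) := by
    have h1 := hq_in_G i0 true
    have h2 := hq_in_G i0 false
    have := hGconv h1 h2 (by norm_num : (0:ℝ) ≤ 1/2) (by norm_num : (0:ℝ) ≤ 1/2) (by norm_num)
    have heq : (1/2 : ℝ) • q i0 true + (1/2 : ℝ) • q i0 false = 0 := by
      show (1/2 : ℝ) • ((ε/2) • (Pi.single i0 1 : Fin n → ℝ))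
        + (1/2 : ℝ) • ((-(ε/2)) • (Pi.single i0 1 : Fin n → ℝ)) = 0
      module
    rwa [heq] at this
  have hGne : G.Nonempty := by
    rcases Finset.eq_empty_or_nonempty G with hGe | h
    · exfalso
      rw [hGe] at h0G
      rw [Finset.coe_empty, convexHull_empty] at h0G
      exact Set.notMem_empty _ h0G
    · exact h
  refine ⟨G, ε/(2*(n+1)), hGF, hGne, by positivity, ?_⟩
  intro x hx
  rw [Metric.mem_ball, dist_zero_right] at hx
  -- convex combination
  set w : Option (Fin n) → ℝ :=
    fun o => match o with
      | none => 1 - ∑ i, (2/ε) * |x i|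
      | some i => (2/ε) * |x i| with hwdef
  set pt : Option (Fin n) → (Fin n → ℝ) :=
    fun o => match o with
      | none => 0
      | some i => q i (decide (0 ≤ x i)) with hptdef
  have hsum_abs : ∑ i, |x i| ≤ (n : ℝ) * ‖x‖ := by
    calc ∑ i, |x i| ≤ ∑ _i : Fin n, ‖x‖ := by
          apply Finset.sum_le_sum
          intro i _
          exact norm_le_pi_norm x i
      _ = (n : ℝ) * ‖x‖ := by rw [Finset.sum_const, Finset.card_univ, Fintype.card_fin,
          nsmul_eq_mul]
  have hwsum_le : ∑ i, (2/ε) * |x i| < 1 := by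
    calc ∑ i, (2/ε) * |x i| = (2/ε) * ∑ i, |x i| := by rw [Finset.mul_sum]
      _ ≤ (2/ε) * ((n:ℝ) * ‖x‖) := by
          apply mul_le_mul_of_nonneg_left hsum_abs (by positivity)
      _ < 1 := by
          have hxlt : ‖x‖ < ε/(2*(n+1)) := hx
          have hn0 : (0:ℝ) < n := by exact_mod_cast hn
          have h1 : (n:ℝ) * ‖x‖ < (n:ℝ) * (ε/(2*((n:ℝ)+1))) := mul_lt_mul_of_pos_left hxlt hn0
          have h2 : (2/ε) * ((n:ℝ) * ‖x‖) < (2/ε) * ((n:ℝ) * (ε/(2*((n:ℝ)+1)))) := by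
            apply mul_lt_mul_of_pos_left h1 (by positivity)
          have h3 : (2/ε) * ((n:ℝ) * (ε/(2*((n:ℝ)+1)))) = (n:ℝ)/((n:ℝ)+1) := by
            field_simp
          have h4 : (n:ℝ)/((n:ℝ)+1) < 1 := by
            rw [div_lt_one (by positivity)]; linarith
          linarith
  have hw0 : ∀ o ∈ (Finset.univ : Finset (Option (Fin n))), 0 ≤ w o := by
    intro o _
    match o with
    | none => simp only [hwdef]; linarith
    | some i => simp only [hwdef]; positivity
  have hw1 : ∑ o : Option (Fin n), w o = 1 := by
    rw [Fintype.sum_option]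
    simp only [hwdef]
    ring
  have hpt : ∀ o ∈ (Finset.univ : Finset (Option (Fin n))), pt o ∈ convexHull ℝ (↑G : Set (Fin n → ℝ)) := by
    intro o _
    match o with
    | none => exact h0G
    | some i => exact hq_in_G i _
  have := hGconv.sum_mem hw0 hw1 hpt
  have hxeq : x = ∑ o : Option (Fin n), w o • pt o := by
    rw [Fintype.sum_option]
    simp only [hwdef, hptdef]
    rw [smul_zero, zero_add]
    have hsingle : ∀ i : Fin n, (x i) • (Pi.single i 1 : Fin n → ℝ) = Pi.single i (x i) := by
      intro i
      funext j
      rcases eq_or_ne j i with rfl | hne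
      · simp
      · simp [Pi.single_eq_of_ne hne]
    have hterm : ∀ i, ((2/ε) * |x i|) • q i (decide (0 ≤ x i)) = Pi.single i (x i) := by
      intro i
      rcases le_or_gt 0 (x i) with h | h
      · have hd : decide (0 ≤ x i) = true := decide_eq_true h
        rw [hd]
        show ((2/ε) * |x i|) • ((ε/2) • (Pi.single i 1 : Fin n → ℝ)) = _
        rw [smul_smul, abs_of_nonneg h]
        have hc : 2/ε * x i * (ε/2) = x i := by field_simp
        rw [hc, hsingle]
      · have hd : decide (0 ≤ x i) = false := decide_eq_false (not_le.2 h)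
        rw [hd]
        show ((2/ε) * |x i|) • ((-(ε/2)) • (Pi.single i 1 : Fin n → ℝ)) = _
        rw [smul_smul, abs_of_neg h]
        have hc : 2/ε * -(x i) * (-(ε/2)) = x i := by field_simp
        rw [hc, hsingle]
    have h1 : ∑ i : Fin n, ((2/ε) * |x i|) • q i (decide (0 ≤ x i))
        = ∑ i : Fin n, Pi.single i (x i) :=
      Finset.sum_congr rfl (fun i _ => hterm i)
    rw [h1, Finset.univ_sum_single]
  rw [hxeq]
  exact this


-- generic lipschitz inf' lemma
lemma lipschitzWith_inf' {α : Type*} [PseudoMetricSpace α] {ι : Type*} {s : Finset ι}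
    (hs : s.Nonempty) {K : NNReal} {f : ι → α → ℝ} (hf : ∀ i ∈ s, LipschitzWith K (f i)) :
    LipschitzWith K (fun x => s.inf' hs (fun i => f i x)) := by
  have key : ∀ a b : α, (s.inf' hs fun i => f i a) - (s.inf' hs fun i => f i b)
      ≤ K * dist a b := by
    intro a b
    obtain ⟨i, hi, hieq⟩ := Finset.exists_mem_eq_inf' hs (fun i => f i b)
    have h1 : (s.inf' hs fun i => f i a) ≤ f i a := Finset.inf'_le _ hi
    have h2 : f i a - f i b ≤ K * dist a b := by
      have := (hf i hi).dist_le_mul a b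
      rw [Real.dist_eq] at this
      linarith [(abs_le.1 this).2]
    rw [hieq]
    linarith
  apply LipschitzWith.of_dist_le_mul
  intro x y
  rw [Real.dist_eq, abs_sub_le_iff]
  constructor
  · exact key x y
  · rw [dist_comm]
    exact key y x

section Geometry
variable (G : Finset (Fin n → ℝ)) (hGne : G.Nonempty)

def Kc : NNReal := G.sup (fun v => ∑ j, ‖v j‖₊)

def mfun (x : Fin n → ℝ) : ℝ := G.inf' hGne (fun v => 1 + dotL v x)

def Pset : Set (Fin n → ℝ) := {x | ∀ v ∈ G, 0 < 1 + dotL v x}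

def wfun (x : Fin n → ℝ) : ℝ := max (mfun G hGne x) 0

lemma dotL_abs_le (v z : Fin n → ℝ) : |dotL v z| ≤ (∑ j, |v j|) * ‖z‖ := by
  rw [dotL_apply]
  calc |∑ j, v j * z j| ≤ ∑ j, |v j * z j| := Finset.abs_sum_le_sum_abs _ _
    _ ≤ ∑ j, |v j| * ‖z‖ := by
        apply Finset.sum_le_sum
        intro j _
        rw [abs_mul]
        apply mul_le_mul_of_nonneg_left _ (abs_nonneg _)
        exact norm_le_pi_norm z j
    _ = (∑ j, |v j|) * ‖z‖ := by rw [← Finset.sum_mul]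

lemma affine_lipschitz {v : Fin n → ℝ} (hv : v ∈ G) :
    LipschitzWith (Kc G) (fun x => 1 + dotL v x) := by
  have h1 : LipschitzWith (∑ j, ‖v j‖₊) (fun x => 1 + dotL v x) := by
    apply LipschitzWith.of_dist_le_mul
    intro x y
    rw [Real.dist_eq]
    have heq : 1 + dotL v x - (1 + dotL v y) = dotL v (x - y) := by
      rw [map_sub]; ring
    rw [heq]
    have := dotL_abs_le v (x - y)
    have hcoe : ((∑ j, ‖v j‖₊ : NNReal) : ℝ) = ∑ j, |v j| := by
      push_cast
      exact Finset.sum_congr rfl (fun j _ => by rw [Real.norm_eq_abs])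
    rw [hcoe, dist_eq_norm]
    exact this
  have h2 : (∑ j, ‖v j‖₊ : NNReal) ≤ Kc G := by
    rw [Kc]
    exact Finset.le_sup (f := fun v : Fin n → ℝ => ∑ j, ‖v j‖₊) hv
  exact h1.weaken h2

lemma mfun_lipschitz : LipschitzWith (Kc G) (mfun G hGne) :=
  lipschitzWith_inf' hGne (fun v hv => affine_lipschitz G hv)

lemma wfun_lipschitz : LipschitzWith (Kc G) (wfun G hGne) :=
  (mfun_lipschitz G hGne).max_const 0

lemma mfun_zero : mfun G hGne 0 = 1 := by
  rw [mfun]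
  have : ∀ v ∈ G, 1 + dotL v (0 : Fin n → ℝ) = 1 := by
    intro v _
    rw [map_zero, add_zero]
  rw [Finset.inf'_congr hGne rfl this]
  exact Finset.inf'_const _ _

lemma mem_Pset_iff (x : Fin n → ℝ) : x ∈ Pset G ↔ 0 < mfun G hGne x := by
  rw [Pset, mfun, Finset.lt_inf'_iff]
  rfl

lemma Pset_open : IsOpen (Pset G) := by
  have : Pset G = ⋂ v ∈ G, (fun x => 1 + dotL v x) ⁻¹' (Set.Ioi 0) := by
    ext x
    simp [Pset, Set.mem_iInter]
  rw [this]
  apply isOpen_biInter_finset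
  intro v _
  exact (continuous_const.add (dotL v).continuous).isOpen_preimage _ isOpen_Ioi

lemma zero_mem_Pset : (0 : Fin n → ℝ) ∈ Pset G := by
  intro v _
  rw [map_zero]
  norm_num

lemma wfun_nonneg (x : Fin n → ℝ) : 0 ≤ wfun G hGne x := le_max_right _ _

lemma wfun_zero : wfun G hGne 0 = 1 := by
  rw [wfun, mfun_zero]
  norm_num

lemma wfun_eq_mfun {x : Fin n → ℝ} (hx : x ∈ Pset G) : wfun G hGne x = mfun G hGne x :=
  max_eq_left (le_of_lt ((mem_Pset_iff G hGne x).1 hx))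

lemma wfun_eq_zero {x : Fin n → ℝ} (hx : x ∉ Pset G) : wfun G hGne x = 0 := by
  apply max_eq_right
  rw [mem_Pset_iff G hGne] at hx
  linarith [not_lt.1 hx]

lemma wfun_pos_iff (x : Fin n → ℝ) : 0 < wfun G hGne x ↔ x ∈ Pset G := by
  constructor
  · intro h
    by_contra hx
    rw [wfun_eq_zero G hGne hx] at h
    exact lt_irrefl _ h
  · intro hx
    rw [wfun_eq_mfun G hGne hx]
    exact (mem_Pset_iff G hGne x).1 hx

variable {ρ : ℝ}

lemma Pset_bounded (hn : 0 < n) (hρ : 0 < ρ)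
    (hball : Metric.ball (0 : Fin n → ℝ) ρ ⊆ convexHull ℝ (↑G : Set (Fin n → ℝ))) :
    ∀ x ∈ Pset G, ‖x‖ ≤ 2/ρ := by
  intro x hx
  set z : Fin n → ℝ := fun j => -(ρ/2) * (if 0 ≤ x j then 1 else -1) with hzdef
  have hznorm : ‖z‖ < ρ := by
    have h1 : ‖z‖ ≤ ρ/2 := by
      apply pi_norm_le_iff_of_nonneg (by linarith) |>.2
      intro j
      rw [hzdef]
      simp only [Real.norm_eq_abs]
      rcases le_or_gt 0 (x j) with h | h
      · rw [if_pos h]; rw [abs_of_nonpos (by linarith)]; ring_nf; exact le_refl _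
      · rw [if_neg (not_le.2 h)]; rw [abs_of_nonneg (by linarith)]; ring_nf; exact le_refl _
    linarith
  have hzco : z ∈ convexHull ℝ (↑G : Set (Fin n → ℝ)) := by
    apply hball
    rw [Metric.mem_ball, dist_zero_right]
    exact hznorm
  -- halfspace argument
  set H : Set (Fin n → ℝ) := {y | -1 ≤ dotL x y} with hHdef
  have hHconv : Convex ℝ H := by
    have hlin : IsLinearMap ℝ (fun y => dotL x y) := ⟨fun a b => map_add _ a b, fun c a => map_smul _ c a⟩
    exact convex_halfSpace_ge hlin (-1)
  have hGH : (↑G : Set (Fin n → ℝ)) ⊆ H := by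
    intro v hv
    have := hx v hv
    rw [hHdef, Set.mem_setOf_eq, ← dotL_comm]
    linarith
  have hzH : z ∈ H := convexHull_min hGH hHconv hzco
  have hcompute : dotL x z = -(ρ/2) * (∑ j, |x j|) := by
    rw [dotL_apply, Finset.mul_sum]
    apply Finset.sum_congr rfl
    intro j _
    show x j * (-(ρ / 2) * (if 0 ≤ x j then (1:ℝ) else -1)) = -(ρ / 2) * |x j|
    rcases le_or_gt 0 (x j) with h | h
    · rw [if_pos h, abs_of_nonneg h]; ring
    · rw [if_neg (not_le.2 h), abs_of_neg h]; ring
  have hnorm_le_sum : ‖x‖ ≤ ∑ j, |x j| := by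
    apply pi_norm_le_iff_of_nonneg (Finset.sum_nonneg (fun j _ => abs_nonneg _)) |>.2
    intro j
    rw [Real.norm_eq_abs]
    exact Finset.single_le_sum (fun i _ => abs_nonneg (x i)) (Finset.mem_univ j)
  have h1 : -1 ≤ -(ρ/2) * (∑ j, |x j|) := by
    rw [← hcompute]
    exact hzH
  have h2 : (ρ/2) * ‖x‖ ≤ (ρ/2) * (∑ j, |x j|) :=
    mul_le_mul_of_nonneg_left hnorm_le_sum (by linarith)
  have h3 : (ρ/2) * (∑ j, |x j|) ≤ 1 := by linarith
  have h4 : (ρ/2) * ‖x‖ ≤ 1 := le_trans h2 h3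
  rw [le_div_iff₀ hρ]
  nlinarith [h4]

lemma ball_subset_Pset (hGne : G.Nonempty) :
    Metric.ball (0 : Fin n → ℝ) (1/((Kc G : ℝ)+1)) ⊆ Pset G := by
  intro x hx
  rw [Metric.mem_ball, dist_zero_right] at hx
  rw [mem_Pset_iff G hGne]
  have hlip := (mfun_lipschitz G hGne).dist_le_mul x 0
  rw [Real.dist_eq, mfun_zero, dist_zero_right] at hlip
  have h1 : mfun G hGne x ≥ 1 - (Kc G : ℝ) * ‖x‖ := by
    have := (abs_le.1 hlip).1
    linarith
  have hK0 : (0:ℝ) ≤ (Kc G : ℝ) := NNReal.coe_nonneg _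
  have h2 : (Kc G : ℝ) * ‖x‖ < 1 := by
    rcases eq_or_lt_of_le hK0 with h | h
    · rw [← h]; norm_num
    · calc (Kc G : ℝ) * ‖x‖ < (Kc G : ℝ) * (1/((Kc G : ℝ)+1)) :=
            mul_lt_mul_of_pos_left hx h
        _ < 1 := by
            rw [mul_one_div, div_lt_one (by linarith)]
            linarith
  linarith

-- the bad set
def PBad : Set (Fin n → ℝ) :=
  ⋃ v ∈ (↑G : Set (Fin n → ℝ)), ⋃ v' ∈ (↑G : Set (Fin n → ℝ)) \ {v},
    {y | dotL (v - v') y = 0}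

lemma PBad_null : volume (PBad G) = 0 := by
  rw [PBad]
  apply (measure_biUnion_null_iff (G.countable_toSet)).2
  intro v _
  apply (measure_biUnion_null_iff ((G.countable_toSet).mono Set.diff_subset)).2
  intro v' hv'
  have hne : v - v' ≠ 0 := by
    intro h
    apply hv'.2
    rw [Set.mem_singleton_iff]
    have := sub_eq_zero.1 h
    exact this.symm
  have hker : {y : Fin n → ℝ | dotL (v - v') y = 0}
      = (LinearMap.ker ((dotL (v - v')) : (Fin n → ℝ) →ₗ[ℝ] ℝ) : Set (Fin n → ℝ)) := by
    ext y
    simp [LinearMap.mem_ker]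
  rw [hker]
  apply Measure.addHaar_submodule
  intro htop
  have : (v - v') ∈ LinearMap.ker ((dotL (v - v')) : (Fin n → ℝ) →ₗ[ℝ] ℝ) := by
    rw [htop]; trivial
  rw [LinearMap.mem_ker] at this
  have hpos := dotL_self_pos hne
  rw [show ((dotL (v - v') : (Fin n → ℝ) →ₗ[ℝ] ℝ) (v - v')) = dotL (v - v') (v - v') from rfl]
    at this
  rw [this] at hpos
  exact lt_irrefl _ hpos

-- local affine structure
lemma wfun_eventually_affine {x : Fin n → ℝ} (hxP : x ∈ Pset G) (hxB : x ∉ PBad G) :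
    ∃ v ∈ G, ∀ᶠ y in 𝓝 x, wfun G hGne y = 1 + dotL v y := by
  obtain ⟨v₀, hv₀, hv₀eq⟩ := Finset.exists_mem_eq_inf' hGne (fun v => 1 + dotL v x)
  refine ⟨v₀, hv₀, ?_⟩
  have hstrict : ∀ v ∈ G, v ≠ v₀ → dotL v₀ x < dotL v x := by
    intro v hv hne
    have hle : 1 + dotL v₀ x ≤ 1 + dotL v x := by
      rw [← hv₀eq]
      exact Finset.inf'_le _ hv
    have hne2 : dotL v₀ x ≠ dotL v x := by
      intro heq
      apply hxB
      rw [PBad]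
      apply Set.mem_biUnion (Finset.mem_coe.2 hv)
      apply Set.mem_biUnion (show v₀ ∈ (↑G : Set (Fin n → ℝ)) \ {v} from
        ⟨Finset.mem_coe.2 hv₀, fun h => hne (Set.mem_singleton_iff.1 h).symm⟩)
      rw [Set.mem_setOf_eq, dotL_sub_left, heq, sub_self]
    exact lt_of_le_of_ne (by linarith) hne2
  -- neighborhood
  set V : Set (Fin n → ℝ) := Pset G ∩
    ⋂ v ∈ G.erase v₀, {y | dotL v₀ y < dotL v y} with hVdef
  have hVopen : IsOpen V := by
    apply (Pset_open G).inter
    apply isOpen_biInter_finset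
    intro v _
    have : {y : Fin n → ℝ | dotL v₀ y < dotL v y} = (fun y => dotL v y - dotL v₀ y) ⁻¹' (Set.Ioi 0) := by
      ext y; simp [sub_pos]
    rw [this]
    exact (((dotL v).continuous).sub ((dotL v₀).continuous)).isOpen_preimage _ isOpen_Ioi
  have hxV : x ∈ V := by
    constructor
    · exact hxP
    · apply Set.mem_biInter
      intro v hv
      exact hstrict v (Finset.mem_of_mem_erase hv) (Finset.ne_of_mem_erase hv)
  filter_upwards [hVopen.mem_nhds hxV] with y hy
  have hyP : y ∈ Pset G := hy.1
  have hymin : ∀ v ∈ G, 1 + dotL v₀ y ≤ 1 + dotL v y := by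
    intro v hv
    rcases eq_or_ne v v₀ with rfl | hne
    · exact le_refl _
    · have : y ∈ {y | dotL v₀ y < dotL v y} := by
        have := hy.2
        rw [Set.mem_iInter₂] at this
        exact this v (Finset.mem_erase.2 ⟨hne, hv⟩)
      have := this
      rw [Set.mem_setOf_eq] at this
      linarith
  have hmy : mfun G hGne y = 1 + dotL v₀ y := by
    apply le_antisymm (Finset.inf'_le _ hv₀)
    apply Finset.le_inf'
    exact hymin
  rw [wfun_eq_mfun G hGne hyP, hmy]

end Geometry


lemma Pset_halfspace (G : Finset (Fin n → ℝ)) {x : Fin n → ℝ} (hx : x ∈ Pset G) :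
    ∀ v ∈ G, 0 < 1 + dotL v x := hx

lemma mem_Pset_of_halfspace (G : Finset (Fin n → ℝ)) {x : Fin n → ℝ}
    (hx : ∀ v ∈ G, 0 < 1 + dotL v x) : x ∈ Pset G := hx

-- auxiliary measure lemmas
lemma translate_image_null {S : Set (Fin n → ℝ)} (hS : volume S = 0) (c : Fin n → ℝ) :
    volume ((fun y => c + y) '' S) = 0 := by
  have heq : (fun y => c + y) '' S = (fun x => x + (-c)) ⁻¹' S := by
    ext x
    constructor
    · rintro ⟨y, hy, rfl⟩
      simpa using hy
    · intro hx
      exact ⟨x + (-c), hx, by module⟩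
  rw [heq, measure_preimage_add_right]
  exact hS

lemma smul_image_null {S : Set (Fin n → ℝ)} (hS : volume S = 0) (s : ℝ) :
    volume ((fun z : Fin n → ℝ => s • z) '' S) = 0 := by
  rw [Set.image_smul, Measure.addHaar_smul, hS, mul_zero]

lemma affine_image_null {S : Set (Fin n → ℝ)} (hS : volume S = 0) (c : Fin n → ℝ) (s : ℝ) :
    volume ((fun z : Fin n → ℝ => c + s • z) '' S) = 0 := by
  have : (fun z : Fin n → ℝ => c + s • z) = (fun y => c + y) ∘ (fun z : Fin n → ℝ => s • z) := rfl
  rw [this, Set.image_comp]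
  exact translate_image_null (smul_image_null hS s) c

lemma ker_null {v : Fin n → ℝ} (hv : v ≠ 0) : volume {y : Fin n → ℝ | dotL v y = 0} = 0 := by
  have hker : {y : Fin n → ℝ | dotL v y = 0}
      = (LinearMap.ker ((dotL v) : (Fin n → ℝ) →ₗ[ℝ] ℝ) : Set (Fin n → ℝ)) := by
    ext y
    simp [LinearMap.mem_ker]
  rw [hker]
  apply Measure.addHaar_submodule
  intro htop
  have hm : v ∈ LinearMap.ker ((dotL v) : (Fin n → ℝ) →ₗ[ℝ] ℝ) := by rw [htop]; trivial
  rw [LinearMap.mem_ker] at hm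
  have hpos := dotL_self_pos hv
  rw [show ((dotL v : (Fin n → ℝ) →ₗ[ℝ] ℝ) v) = dotL v v from rfl] at hm
  rw [hm] at hpos
  exact lt_irrefl _ hpos

lemma hyperplane_null (v : Fin n → ℝ) : volume {x : Fin n → ℝ | 1 + dotL v x = 0} = 0 := by
  rcases eq_or_ne v 0 with rfl | hv
  · have : {x : Fin n → ℝ | 1 + dotL (0 : Fin n → ℝ) x = 0} = ∅ := by
      ext x
      simp [dotL_zero_left]
    rw [this, measure_empty]
  · have hvv : (0:ℝ) < dotL v v := dotL_self_pos hv
    set x₀ : Fin n → ℝ := (-1/(dotL v v)) • v with hx₀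
    have hdx₀ : dotL v x₀ = -1 := by
      rw [hx₀, _root_.map_smul, smul_eq_mul]
      field_simp
    have heq : {x : Fin n → ℝ | 1 + dotL v x = 0}
        = (fun y => x₀ + y) '' {y | dotL v y = 0} := by
      ext x
      constructor
      · intro hx
        rw [Set.mem_setOf_eq] at hx
        refine ⟨x - x₀, ?_, by module⟩
        rw [Set.mem_setOf_eq, map_sub, hdx₀]
        linarith
      · rintro ⟨y, hy, rfl⟩
        rw [Set.mem_setOf_eq] at hy ⊢
        rw [map_add, hdx₀, hy]
        ring
    rw [heq]
    exact translate_image_null (ker_null hv) x₀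

-- main construction
lemma construction (hn : 0 < n) (Ω : Set (Fin n → ℝ)) (hΩo : IsOpen Ω)
    (hΩb : Bornology.IsBounded Ω) (hΩne : Ω.Nonempty) (F : Set (Fin n → ℝ))
    (h0 : (0 : Fin n → ℝ) ∈ interior (convexHull ℝ F)) :
    ∃ (u : (Fin n → ℝ) → ℝ) (C : NNReal), LipschitzWith C u ∧ (∀ x ∉ Ω, u x = 0) ∧
      (∀ᵐ x ∂(volume : Measure (Fin n → ℝ)), x ∈ Ω → grad u x ∈ F) ∧
      (∀ x, 0 ≤ u x) ∧ 0 < ∫ x in Ω, u x := by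
  classical
  haveI : Nontrivial (Fin n → ℝ) := by
    refine ⟨0, Pi.single ⟨0, hn⟩ 1, fun h => ?_⟩
    have := congrFun h ⟨0, hn⟩
    simp at this
  obtain ⟨G, ρ, hGF, hGne, hρ, hball⟩ := exists_finset_ball_subset hn h0
  set P : Set (Fin n → ℝ) := Pset G with hPdef
  set w : (Fin n → ℝ) → ℝ := wfun G hGne with hwdef
  set K : NNReal := Kc G with hKdef
  set rb : ℝ := 2/ρ with hrbdef
  have hrb : 0 < rb := by positivity
  set r₀ : ℝ := 1/((K:ℝ)+1) with hr₀def
  have hr₀ : 0 < r₀ := by positivity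
  have hPsub : P ⊆ Metric.closedBall 0 rb := by
    intro x hx
    rw [Metric.mem_closedBall, dist_zero_right]
    exact Pset_bounded G hn hρ hball x hx
  have hclPsub : closure P ⊆ Metric.closedBall 0 rb :=
    closure_minimal hPsub Metric.isClosed_closedBall
  have hr₀P : Metric.ball (0 : Fin n → ℝ) r₀ ⊆ P := ball_subset_Pset G hGne
  have hΩpos : 0 < volume Ω := hΩo.measure_pos volume hΩne
  -- Vitali setup
  set ι := (Fin n → ℝ) × ℝ
  set B : ι → Set (Fin n → ℝ) := fun a => (fun z => a.1 + a.2 • z) '' (closure P) with hBdef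
  set O : ι → Set (Fin n → ℝ) := fun a => (fun z => a.1 + a.2 • z) '' P with hOdef
  set t : Set ι := {a | 0 < a.2 ∧ B a ⊆ Ω ∧ a.1 ∈ Ω} with htdef
  have hOB : ∀ a, O a ⊆ B a := fun a => Set.image_mono subset_closure
  have hmem_O_iff : ∀ (a : ι), 0 < a.2 → ∀ x, (x ∈ O a ↔ a.2⁻¹ • (x - a.1) ∈ P) := by
    intro a ha x
    constructor
    · rintro ⟨z, hz, rfl⟩
      have : a.2⁻¹ • (a.1 + a.2 • z - a.1) = z := by
        rw [add_sub_cancel_left, smul_smul, inv_mul_cancel₀ (ne_of_gt ha), one_smul]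
      rwa [this]
    · intro hz
      refine ⟨a.2⁻¹ • (x - a.1), hz, ?_⟩
      show a.1 + a.2 • (a.2⁻¹ • (x - a.1)) = x
      rw [smul_smul, mul_inv_cancel₀ (ne_of_gt ha), one_smul]
      abel
  have hball_O : ∀ a : ι, 0 < a.2 → Metric.ball a.1 (a.2 * r₀) ⊆ O a := by
    intro a ha y hy
    rw [hmem_O_iff a ha]
    apply hr₀P
    rw [Metric.mem_ball, dist_zero_right, norm_smul, Real.norm_eq_abs, abs_inv,
      abs_of_pos ha]
    rw [Metric.mem_ball, dist_eq_norm] at hy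
    rw [inv_mul_lt_iff₀ ha]
    rwa [show y - a.1 = y - a.1 from rfl]
  -- Vitali covering
  have hvitali : ∃ U ⊆ t, U.Countable ∧ U.PairwiseDisjoint B ∧
      volume (Ω \ ⋃ a ∈ U, B a) = 0 := by
    set C : NNReal := Real.toNNReal ((3*rb/r₀)^n) with hCdef
    apply Vitali.exists_disjoint_covering_ae volume Ω t C
      (fun a => a.2 * rb) (fun a => a.1) B
    · -- B a ⊆ closedBall
      rintro a ⟨ha2, _, _⟩
      rintro x ⟨z, hz, rfl⟩
      rw [Metric.mem_closedBall, dist_eq_norm, add_sub_cancel_left, norm_smul,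
        Real.norm_eq_abs, abs_of_pos ha2]
      apply mul_le_mul_of_nonneg_left _ (le_of_lt ha2)
      have := hclPsub hz
      rwa [Metric.mem_closedBall, dist_zero_right] at this
    · -- doubling
      rintro a ⟨ha2, _, _⟩
      have h1 : volume (Metric.closedBall a.1 (3 * (a.2 * rb)))
          = ENNReal.ofReal ((3 * (a.2 * rb))^n) * volume (Metric.ball (0:Fin n → ℝ) 1) := by
        rw [Measure.addHaar_closedBall _ _ (by positivity)]
        rw [Module.finrank_fin_fun]
      have h2 : volume (Metric.ball a.1 (a.2 * r₀))
          = ENNReal.ofReal ((a.2 * r₀)^n) * volume (Metric.ball (0:Fin n → ℝ) 1) := by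
        rw [Measure.addHaar_ball _ _ (by positivity)]
        rw [Module.finrank_fin_fun]
      have hsub : Metric.ball a.1 (a.2 * r₀) ⊆ B a :=
        subset_trans (hball_O a ha2) (hOB a)
      have h3 : volume (Metric.ball a.1 (a.2 * r₀)) ≤ volume (B a) := measure_mono hsub
      have hfactor : (3 * (a.2 * rb))^n = (3*rb/r₀)^n * (a.2 * r₀)^n := by
        rw [← mul_pow]
        congr 1
        field_simp
      calc volume (Metric.closedBall a.1 (3 * (a.2 * rb)))
          = ENNReal.ofReal ((3 * (a.2 * rb))^n) * volume (Metric.ball (0:Fin n → ℝ) 1) := h1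
        _ = ENNReal.ofReal ((3*rb/r₀)^n) *
            (ENNReal.ofReal ((a.2 * r₀)^n) * volume (Metric.ball (0:Fin n → ℝ) 1)) := by
            rw [hfactor, ENNReal.ofReal_mul (by positivity), mul_assoc]
        _ = (C : ENNReal) * volume (Metric.ball a.1 (a.2 * r₀)) := by
            rw [← h2]
            rfl
        _ ≤ (C : ENNReal) * volume (B a) := mul_le_mul_right h3 _
    · -- interior nonempty
      rintro a ⟨ha2, _, _⟩
      refine ⟨a.1, ?_⟩
      apply mem_interior.2
      refine ⟨Metric.ball a.1 (a.2 * r₀), subset_trans (hball_O a ha2) (hOB a),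
        Metric.isOpen_ball, ?_⟩
      rw [Metric.mem_ball, dist_self]
      positivity
    · -- closed
      rintro a ⟨ha2, _, _⟩
      have hcomp : IsCompact (closure P) :=
        (Metric.isBounded_closedBall.subset hPsub).isCompact_closure
      exact (hcomp.image (continuous_const.add (continuous_id.const_smul a.2))).isClosed
    · -- fineness
      intro x hx ε hε
      obtain ⟨δ, hδ, hδsub⟩ := Metric.isOpen_iff.1 hΩo x hx
      set s : ℝ := min (δ/(2*rb)) (ε/rb) with hsdef
      have hs : 0 < s := by
        apply lt_min <;> positivity
      refine ⟨(x, s), ⟨hs, ?_, hx⟩, ?_, rfl⟩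
      · -- B ⊆ Ω
        rintro y ⟨z, hz, rfl⟩
        apply hδsub
        rw [Metric.mem_ball, dist_eq_norm, add_sub_cancel_left, norm_smul,
          Real.norm_eq_abs, abs_of_pos hs]
        have hzb : ‖z‖ ≤ rb := by
          have := hclPsub hz
          rwa [Metric.mem_closedBall, dist_zero_right] at this
        have h1 : s * ‖z‖ ≤ s * rb := mul_le_mul_of_nonneg_left hzb (le_of_lt hs)
        have h2 : s * rb ≤ (δ/(2*rb)) * rb := by
          apply mul_le_mul_of_nonneg_right (min_le_left _ _) (le_of_lt hrb)
        have h3 : (δ/(2*rb)) * rb = δ/2 := by field_simp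
        calc s * ‖z‖ ≤ δ/2 := by linarith [h1, h2, h3 ▸ h2]
          _ < δ := by linarith
      · -- radius small
        show s * rb ≤ ε
        calc s * rb ≤ (ε/rb) * rb := mul_le_mul_of_nonneg_right (min_le_right _ _) (le_of_lt hrb)
          _ = ε := by field_simp
  obtain ⟨U, hUt, hUcount, hUdisj, hUcover⟩ := hvitali
  have hUprop : ∀ a ∈ U, 0 < a.2 ∧ B a ⊆ Ω ∧ a.1 ∈ Ω := fun a ha => hUt ha
  set val : ι → (Fin n → ℝ) → ℝ :=
    fun a x => a.2 * wfun G hGne (a.2⁻¹ • (x - a.1)) with hvaldef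
  set u : (Fin n → ℝ) → ℝ :=
    fun x => if h : ∃ a, a ∈ U ∧ x ∈ O a then val h.choose x else 0 with hudef
  have huniq : ∀ a ∈ U, ∀ a' ∈ U, ∀ x : Fin n → ℝ, x ∈ O a → x ∈ O a' → a = a' := by
    intro a ha a' ha' x hx hx'
    by_contra hne
    have hdis := hUdisj ha ha' hne
    exact (Set.disjoint_left.1 hdis) (hOB a hx) (hOB a' hx')
  have hu_eq : ∀ a ∈ U, ∀ x ∈ O a, u x = val a x := by
    intro a ha x hx
    have h : ∃ b, b ∈ U ∧ x ∈ O b := ⟨a, ha, hx⟩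
    simp only [hudef]
    rw [dif_pos h]
    have hcs := h.choose_spec
    rw [huniq _ hcs.1 a ha x hcs.2 hx]
  have hu_zero : ∀ x, (¬ ∃ a, a ∈ U ∧ x ∈ O a) → u x = 0 := by
    intro x hx
    simp only [hudef]
    exact dif_neg hx
  have hval_lip : ∀ a : ι, 0 < a.2 → ∀ x y, |val a x - val a y| ≤ (K:ℝ) * dist x y := by
    intro a ha x y
    have hwlip : LipschitzWith K (wfun G hGne) := wfun_lipschitz G hGne
    have h2 := hwlip.dist_le_mul (a.2⁻¹ • (x - a.1)) (a.2⁻¹ • (y - a.1))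
    rw [Real.dist_eq] at h2
    have h3 : dist (a.2⁻¹ • (x - a.1)) (a.2⁻¹ • (y - a.1)) = a.2⁻¹ * dist x y := by
      rw [dist_eq_norm, ← smul_sub, norm_smul, Real.norm_eq_abs, abs_inv, abs_of_pos ha,
        dist_eq_norm]
      congr 2
      abel
    rw [h3] at h2
    have h1 : val a x - val a y
        = a.2 * (wfun G hGne (a.2⁻¹ • (x - a.1)) - wfun G hGne (a.2⁻¹ • (y - a.1))) := by
      simp only [hvaldef]
      ring
    calc |val a x - val a y|
        = a.2 * |wfun G hGne (a.2⁻¹ • (x - a.1)) - wfun G hGne (a.2⁻¹ • (y - a.1))| := by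
          rw [h1, abs_mul, abs_of_pos ha]
      _ ≤ a.2 * ((K:ℝ) * (a.2⁻¹ * dist x y)) := mul_le_mul_of_nonneg_left h2 ha.le
      _ = (K:ℝ) * dist x y := by
          field_simp
  have hval_nonneg : ∀ a : ι, 0 < a.2 → ∀ x, 0 ≤ val a x := by
    intro a ha x
    simp only [hvaldef]
    exact mul_nonneg ha.le (wfun_nonneg G hGne _)
  have hval_zero : ∀ a : ι, 0 < a.2 → ∀ x, x ∉ O a → val a x = 0 := by
    intro a ha x hx
    rw [hmem_O_iff a ha] at hx
    simp only [hvaldef]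
    rw [wfun_eq_zero G hGne hx, mul_zero]
  have hu_nonneg : ∀ x, 0 ≤ u x := by
    intro x
    simp only [hudef]
    split_ifs with h
    · exact hval_nonneg _ (hUprop _ h.choose_spec.1).1 x
    · exact le_refl 0
  have hkey : ∀ x y : Fin n → ℝ, u x ≤ u y + (K:ℝ) * dist x y := by
    intro x y
    by_cases hx : ∃ a, a ∈ U ∧ x ∈ O a
    · obtain ⟨a, ha, hxa⟩ := hx
      rw [hu_eq a ha x hxa]
      have ha2 := (hUprop a ha).1
      by_cases hy : y ∈ O a
      · rw [hu_eq a ha y hy]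
        have := hval_lip a ha2 x y
        linarith [(abs_le.1 this).2]
      · have hvy : val a y = 0 := hval_zero a ha2 y hy
        have hlip := hval_lip a ha2 x y
        rw [hvy, sub_zero] at hlip
        have h2 : 0 ≤ u y := hu_nonneg y
        linarith [(abs_le.1 hlip).2]
    · rw [hu_zero x hx]
      have h2 : 0 ≤ u y := hu_nonneg y
      have h3 : (0:ℝ) ≤ (K:ℝ) * dist x y := by positivity
      linarith
  have hulip : LipschitzWith K u := by
    apply LipschitzWith.of_dist_le_mul
    intro x y
    rw [Real.dist_eq, abs_sub_le_iff]
    constructor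
    · linarith [hkey x y]
    · have := hkey y x
      rw [dist_comm] at this
      linarith
  have hOsubΩ : ∀ a ∈ U, O a ⊆ Ω := fun a ha => subset_trans (hOB a) (hUprop a ha).2.1
  have hu_outside : ∀ x ∉ Ω, u x = 0 := by
    intro x hx
    apply hu_zero
    rintro ⟨a, ha, hxa⟩
    exact hx (hOsubΩ a ha hxa)
  -- frontier of P is null
  have hfrontier_null : volume (closure P \ P) = 0 := by
    have hsub : closure P \ P ⊆ ⋃ v ∈ (↑G : Set (Fin n → ℝ)), {x | 1 + dotL v x = 0} := by
      rintro x ⟨hxc, hxP⟩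
      have hge : ∀ v ∈ G, 0 ≤ 1 + dotL v x := by
        intro v hv
        have hPsubH : P ⊆ {y : Fin n → ℝ | 0 ≤ 1 + dotL v y} := fun y hy =>
          le_of_lt (Pset_halfspace G hy v hv)
        have hH : IsClosed {y : Fin n → ℝ | 0 ≤ 1 + dotL v y} := by
          have heq2 : {y : Fin n → ℝ | 0 ≤ 1 + dotL v y}
              = (fun y => 1 + dotL v y) ⁻¹' (Set.Ici 0) := rfl
          rw [heq2]
          exact IsClosed.preimage (continuous_const.add (dotL v).continuous) isClosed_Ici
        exact closure_minimal hPsubH hH hxc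
      have hex : ∃ v ∈ G, ¬ (0 < 1 + dotL v x) := by
        by_contra hc
        push_neg at hc
        exact hxP (mem_Pset_of_halfspace G hc)
      obtain ⟨v, hv, hnlt⟩ := hex
      apply Set.mem_biUnion (Finset.mem_coe.2 hv)
      rw [Set.mem_setOf_eq]
      have := hge v hv
      linarith [not_lt.1 hnlt]
    apply measure_mono_null hsub
    apply (measure_biUnion_null_iff G.countable_toSet).2
    intro v _
    exact hyperplane_null v
  -- bad set
  set Bad : Set (Fin n → ℝ) := (Ω \ ⋃ a ∈ U, O a)
    ∪ ⋃ a ∈ U, (fun z => a.1 + a.2 • z) '' (PBad G) with hBaddef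
  have hBadnull : volume Bad = 0 := by
    apply measure_union_null
    · have hsub : Ω \ ⋃ a ∈ U, O a
          ⊆ (Ω \ ⋃ a ∈ U, B a) ∪ ⋃ a ∈ U, (B a \ O a) := by
        rintro x ⟨hxΩ, hxO⟩
        by_cases hxB : x ∈ ⋃ a ∈ U, B a
        · right
          rw [Set.mem_iUnion₂] at hxB ⊢
          obtain ⟨a, ha, hxa⟩ := hxB
          refine ⟨a, ha, hxa, ?_⟩
          intro hmem
          exact hxO (Set.mem_iUnion₂.2 ⟨a, ha, hmem⟩)
        · left
          exact ⟨hxΩ, hxB⟩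
      apply measure_mono_null hsub
      apply measure_union_null hUcover
      apply (measure_biUnion_null_iff hUcount).2
      intro a _
      have h1 : B a \ O a ⊆ (fun z => a.1 + a.2 • z) '' (closure P \ P) := by
        rintro x ⟨⟨z, hz, rfl⟩, hxO⟩
        refine ⟨z, ⟨hz, ?_⟩, rfl⟩
        intro hzP
        exact hxO ⟨z, hzP, rfl⟩
      exact measure_mono_null h1 (affine_image_null hfrontier_null a.1 a.2)
    · apply (measure_biUnion_null_iff hUcount).2
      intro a _
      exact affine_image_null (PBad_null G) a.1 a.2
  have hOopen : ∀ a : ι, 0 < a.2 → IsOpen (O a) := by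
    intro a ha2
    have heq : O a = (fun y => a.2⁻¹ • (y - a.1)) ⁻¹' P := by
      ext y
      exact hmem_O_iff a ha2 y
    rw [heq]
    exact (Pset_open G).preimage ((continuous_const_smul (a.2⁻¹ : ℝ)).comp (continuous_sub_right a.1) :
      Continuous (fun y : Fin n → ℝ => a.2⁻¹ • (y - a.1)))
  -- gradient at good points
  have hgood : ∀ x ∈ Ω \ Bad, ∃ v ∈ G, HasFDerivAt u (dotL v) x := by
    rintro x ⟨hxΩ, hxBad⟩
    have hxO : x ∈ ⋃ a ∈ U, O a := by
      by_contra hc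
      exact hxBad (Or.inl ⟨hxΩ, hc⟩)
    rw [Set.mem_iUnion₂] at hxO
    obtain ⟨a, ha, hxa⟩ := hxO
    have ha2 : 0 < a.2 := (hUprop a ha).1
    set z₀ : Fin n → ℝ := a.2⁻¹ • (x - a.1) with hz₀
    have hz₀P : z₀ ∈ P := (hmem_O_iff a ha2 x).1 hxa
    have hxz₀ : x = a.1 + a.2 • z₀ := by
      rw [hz₀, smul_smul, mul_inv_cancel₀ (ne_of_gt ha2), one_smul]
      abel
    have hz₀Bad : z₀ ∉ PBad G := by
      intro hmem
      apply hxBad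
      right
      exact Set.mem_iUnion₂.2 ⟨a, ha, ⟨z₀, hmem, hxz₀.symm⟩⟩
    obtain ⟨v, hvG, hev⟩ := wfun_eventually_affine G hGne hz₀P hz₀Bad
    refine ⟨v, hvG, ?_⟩
    have haff : HasFDerivAt (fun y => (a.2 - dotL v a.1) + dotL v y) (dotL v) x :=
      (dotL v).hasFDerivAt.const_add _
    apply haff.congr_of_eventuallyEq
    have htend : Tendsto (fun y : Fin n → ℝ => a.2⁻¹ • (y - a.1)) (𝓝 x) (𝓝 z₀) := by
      have hc : Continuous (fun y : Fin n → ℝ => a.2⁻¹ • (y - a.1)) :=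
        (continuous_const_smul (a.2⁻¹ : ℝ)).comp (continuous_sub_right a.1)
      have := hc.tendsto x
      rwa [show a.2⁻¹ • (x - a.1) = z₀ from rfl] at this
    have hev2 : ∀ᶠ y in 𝓝 x,
        wfun G hGne (a.2⁻¹ • (y - a.1)) = 1 + dotL v (a.2⁻¹ • (y - a.1)) :=
      htend.eventually hev
    filter_upwards [hev2, (hOopen a ha2).mem_nhds hxa] with y hy1 hy2
    rw [hu_eq a ha y hy2]
    simp only [hvaldef]
    rw [hy1, _root_.map_smul, map_sub, smul_eq_mul]
    field_simp
    ring
  have hae_grad : ∀ᵐ x ∂(volume : Measure (Fin n → ℝ)), x ∈ Ω → grad u x ∈ F := by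
    rw [ae_iff]
    apply measure_mono_null _ hBadnull
    intro x hx
    rw [Set.mem_setOf_eq, Classical.not_imp] at hx
    by_contra hxB
    obtain ⟨v, hvG, hder⟩ := hgood x ⟨hx.1, hxB⟩
    apply hx.2
    rw [grad_eq_of_hasFDerivAt hder]
    exact hGF (Finset.mem_coe.2 hvG)
  -- integral positivity
  have hUne : U.Nonempty := by
    by_contra hU
    rw [Set.not_nonempty_iff_eq_empty] at hU
    rw [hU] at hUcover
    simp only [Set.mem_empty_iff_false, Set.iUnion_of_empty, Set.iUnion_empty,
      Set.diff_empty] at hUcover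
    exact absurd hUcover (ne_of_gt hΩpos)
  obtain ⟨a₀, ha₀⟩ := hUne
  have ha₀2 : 0 < a₀.2 := (hUprop a₀ ha₀).1
  have hpt : a₀.1 ∈ O a₀ := by
    rw [hmem_O_iff a₀ ha₀2, sub_self, smul_zero]
    exact zero_mem_Pset G
  have hucont : Continuous u := hulip.continuous
  have hintOn : IntegrableOn u Ω volume := by
    have hcomp : IsCompact (closure Ω) := hΩb.isCompact_closure
    exact (hucont.continuousOn.integrableOn_compact hcomp).mono_set subset_closure
  have hsupp : O a₀ ⊆ Function.support u ∩ Ω := by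
    intro y hy
    constructor
    · rw [Function.mem_support, hu_eq a₀ ha₀ y hy]
      have hyP : a₀.2⁻¹ • (y - a₀.1) ∈ P := (hmem_O_iff a₀ ha₀2 y).1 hy
      have hwpos := (wfun_pos_iff G hGne _).2 hyP
      simp only [hvaldef]
      exact ne_of_gt (mul_pos ha₀2 hwpos)
    · exact hOsubΩ a₀ ha₀ hy
  have hO₀pos : 0 < volume (O a₀) := (hOopen a₀ ha₀2).measure_pos volume ⟨a₀.1, hpt⟩
  have hint_pos : 0 < ∫ x in Ω, u x := by
    rw [setIntegral_pos_iff_support_of_nonneg_ae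
      (Filter.Eventually.of_forall (fun x => hu_nonneg x)) hintOn]
    exact lt_of_lt_of_le hO₀pos (measure_mono hsupp)
  exact ⟨u, K, hulip, hu_outside, hae_grad, hu_nonneg, hint_pos⟩



lemma construction_zero (hn : n = 0) (Ω : Set (Fin n → ℝ)) (hΩne : Ω.Nonempty)
    (F : Set (Fin n → ℝ)) (h0 : (0 : Fin n → ℝ) ∈ interior (convexHull ℝ F)) :
    ∃ (u : (Fin n → ℝ) → ℝ) (C : NNReal), LipschitzWith C u ∧ (∀ x ∉ Ω, u x = 0) ∧
      (∀ᵐ x ∂(volume : Measure (Fin n → ℝ)), x ∈ Ω → grad u x ∈ F) ∧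
      (∀ x, 0 ≤ u x) ∧ 0 < ∫ x in Ω, u x := by
  subst hn
  have hsub : ∀ x y : Fin 0 → ℝ, x = y := fun x y => funext (fun j => j.elim0)
  have hΩuniv : Ω = Set.univ := by
    obtain ⟨x₀, hx₀⟩ := hΩne
    ext x
    simp only [Set.mem_univ, iff_true]
    rw [hsub x x₀]
    exact hx₀
  have hgrad : ∀ (u : (Fin 0 → ℝ) → ℝ) (x : Fin 0 → ℝ), grad u x = 0 :=
    fun u x => funext (fun j => j.elim0)
  have hF0 : (0 : Fin 0 → ℝ) ∈ F := by
    have hne : F.Nonempty := by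
      by_contra hc
      rw [Set.not_nonempty_iff_eq_empty] at hc
      rw [hc, convexHull_empty, interior_empty] at h0
      exact h0
    obtain ⟨f, hf⟩ := hne
    rwa [hsub 0 f]
  refine ⟨fun _ => 1, 1, ?_, ?_, ?_, ?_, ?_⟩
  · exact (LipschitzWith.const 1).weaken zero_le
  · intro x hx
    exfalso
    rw [hΩuniv] at hx
    exact hx (Set.mem_univ x)
  · apply Eventually.of_forall
    intro x _
    rw [hgrad]
    exact hF0
  · intro x
    norm_num
  · rw [MeasureTheory.setIntegral_const]
    rw [smul_eq_mul, mul_one]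
    have hcpt : IsCompact Ω := by
      have : Ω.Subsingleton := fun x hx y hy => hsub x y
      exact this.isCompact
    have hlt : volume Ω < ⊤ := hcpt.measure_lt_top
    have hpos : 0 < volume Ω := by
      rw [hΩuniv]
      apply IsOpen.measure_pos volume isOpen_univ
      exact ⟨0, Set.mem_univ _⟩
    exact ENNReal.toReal_pos (ne_of_gt hpos) (ne_of_lt hlt)

end Main
end Stmt8

/-- For `Ω ⊆ ℝⁿ` open, bounded and nonempty and `F ⊆ ℝⁿ`, there exists
`u ∈ W₀^{1,∞}(Ω)` with `Du ∈ F` a.e. in `Ω` iff `0 ∈ F ∪ int (co F)`; moreover, when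
`0 ∈ int (co F)`, `u` can be chosen with `u ≥ 0` and `∫_Ω u > 0`. -/
theorem stmt8 {n : ℕ} (Ω : Set (Fin n → ℝ)) (hΩo : IsOpen Ω)
    (hΩb : Bornology.IsBounded Ω) (hΩne : Ω.Nonempty) (F : Set (Fin n → ℝ)) :
    ((∃ (u : (Fin n → ℝ) → ℝ) (C : NNReal), LipschitzWith C u ∧ (∀ x ∉ Ω, u x = 0) ∧
        (∀ᵐ x ∂(volume : Measure (Fin n → ℝ)), x ∈ Ω → grad u x ∈ F)) ↔
      (0 : Fin n → ℝ) ∈ F ∪ interior (convexHull ℝ F)) ∧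
    ((0 : Fin n → ℝ) ∈ interior (convexHull ℝ F) →
      ∃ (u : (Fin n → ℝ) → ℝ) (C : NNReal), LipschitzWith C u ∧ (∀ x ∉ Ω, u x = 0) ∧
        (∀ᵐ x ∂(volume : Measure (Fin n → ℝ)), x ∈ Ω → grad u x ∈ F) ∧
        (∀ x, 0 ≤ u x) ∧ 0 < ∫ x in Ω, u x) := by
  have hcons : (0 : Fin n → ℝ) ∈ interior (convexHull ℝ F) →
      ∃ (u : (Fin n → ℝ) → ℝ) (C : NNReal), LipschitzWith C u ∧ (∀ x ∉ Ω, u x = 0) ∧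
        (∀ᵐ x ∂(volume : Measure (Fin n → ℝ)), x ∈ Ω → grad u x ∈ F) ∧
        (∀ x, 0 ≤ u x) ∧ 0 < ∫ x in Ω, u x := by
    intro h0
    rcases Nat.eq_zero_or_pos n with hn | hn
    · exact Stmt8.construction_zero hn Ω hΩne F h0
    · exact Stmt8.construction hn Ω hΩo hΩb hΩne F h0
  constructor
  · constructor
    · rintro ⟨u, C, hu, hz, hae⟩
      exact Stmt8.forward Ω hΩo hΩb hΩne F u C hu hz hae
    · intro h0
      rcases h0 with h0F | h0I
      · refine ⟨fun _ => 0, 0, LipschitzWith.const 0, fun x _ => rfl, ?_⟩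
        apply Eventually.of_forall
        intro x _
        have hg : grad (fun _ : Fin n → ℝ => (0:ℝ)) x = 0 := by
          funext j
          rw [grad, fderiv_fun_const]
          simp
        rw [hg]
        exact h0F
      · obtain ⟨u, C, h1, h2, h3, _, _⟩ := hcons h0I
        exact ⟨u, C, h1, h2, h3⟩
  · exact hcons
end
end

section
/- Let n ≥ 2, b ∈ R^n nonzero, and S an n-dimensional linear subspace of the space of real symmetric n×n matrices. Then S = R^n ∨ b if and only if Ab = 0 for every A in the orthogonal complement S^⊥ of S (inside the symmetric matrices, with respect to the Frobenius inner product). -/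
noncomputable section
open Matrix
open scoped RealInnerProductSpace

def toE {n : ℕ} : Matrix (Fin n) (Fin n) ℝ ≃ₗ[ℝ] EuclideanSpace ℝ (Fin n × Fin n) where
  toFun A := WithLp.toLp 2 (fun p : Fin n × Fin n => A p.1 p.2)
  invFun v := Matrix.of fun i j => v (i, j)
  map_add' _ _ := rfl
  map_smul' _ _ := rfl
  left_inv _ := rfl
  right_inv _ := rfl

/-- The Frobenius inner product of two matrices. -/
def frob {m n : ℕ} (A B : Matrix (Fin m) (Fin n) ℝ) : ℝ := (Aᵀ * B).trace

/-- The symmetric product `x ∨ y = x yᵀ + y xᵀ` of vectors in `ℝⁿ`. -/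
def symProd {n : ℕ} (x y : Fin n → ℝ) : Matrix (Fin n) (Fin n) ℝ :=
  vecMulVec x y + vecMulVec y x

/-- The subspace `ℝⁿ ∨ b = {x ∨ b : x ∈ ℝⁿ}` of `n × n` matrices. -/
def symLine (n : ℕ) (b : Fin n → ℝ) : Submodule ℝ (Matrix (Fin n) (Fin n) ℝ) where
  carrier := {M | ∃ x : Fin n → ℝ, M = symProd x b}
  add_mem' := by
    rintro M N ⟨x, rfl⟩ ⟨y, rfl⟩
    exact ⟨x + y, by ext i j; simp [symProd, vecMulVec_apply]; ring⟩
  zero_mem' := ⟨0, by ext i j; simp [symProd, vecMulVec_apply]⟩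
  smul_mem' := by
    rintro c M ⟨x, rfl⟩
    exact ⟨c • x, by ext i j; simp [symProd, vecMulVec_apply]; ring⟩

lemma frob_eq {n : ℕ} (A B : Matrix (Fin n) (Fin n) ℝ) :
    frob A B = ∑ i, ∑ j, A i j * B i j := by
  simp [frob, Matrix.trace, Matrix.mul_apply, Matrix.diag, Matrix.transpose_apply]
  exact Finset.sum_comm

lemma frob_symProd {n : ℕ} (A : Matrix (Fin n) (Fin n) ℝ) (hA : A.IsSymm)
    (x b : Fin n → ℝ) : frob A (symProd x b) = 2 * (x ⬝ᵥ A.mulVec b) := by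
  have hsym : ∀ i j, A i j = A j i := fun i j => hA.apply j i
  simp only [frob_eq, symProd, Matrix.add_apply, vecMulVec_apply, dotProduct,
    Matrix.mulVec]
  rw [two_mul]
  simp only [mul_add, Finset.sum_add_distrib]
  congr 1
  · refine Finset.sum_congr rfl fun i _ => ?_
    rw [Finset.mul_sum]
    exact Finset.sum_congr rfl fun j _ => by ring
  · rw [Finset.sum_comm]
    refine Finset.sum_congr rfl fun j _ => ?_
    rw [Finset.mul_sum]
    refine Finset.sum_congr rfl fun i _ => ?_
    rw [hsym i j]; ring

lemma inner_toE {n : ℕ} (A B : Matrix (Fin n) (Fin n) ℝ) :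
    ⟪toE A, toE B⟫ = frob A B := by
  simp [PiLp.inner_apply, RCLike.inner_apply, toE, frob_eq, Fintype.sum_prod_type]
  exact Finset.sum_congr rfl fun i _ => Finset.sum_congr rfl fun j _ => mul_comm _ _

lemma symProd_isSymm {n : ℕ} (x b : Fin n → ℝ) : (symProd x b).IsSymm := by
  ext i j
  simp [symProd, Matrix.transpose_apply, vecMulVec_apply]
  ring

def symL {n : ℕ} (b : Fin n → ℝ) : (Fin n → ℝ) →ₗ[ℝ] Matrix (Fin n) (Fin n) ℝ where
  toFun x := symProd x b
  map_add' x y := by ext i j; simp [symProd, vecMulVec_apply]; ring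
  map_smul' c x := by ext i j; simp [symProd, vecMulVec_apply]; ring

lemma range_symL {n : ℕ} (b : Fin n → ℝ) : LinearMap.range (symL b) = symLine n b := by
  ext M
  simp only [LinearMap.mem_range]
  constructor
  · rintro ⟨x, rfl⟩; exact ⟨x, rfl⟩
  · rintro ⟨x, rfl⟩; exact ⟨x, rfl⟩

lemma symL_inj {n : ℕ} (b : Fin n → ℝ) (hb : b ≠ 0) : Function.Injective (symL b) := by
  rw [← LinearMap.ker_eq_bot]
  rw [LinearMap.ker_eq_bot']
  intro x hx
  have h : ∀ i j, x i * b j + b i * x j = 0 := by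
    intro i j
    have := congrFun (congrFun hx i) j
    simpa [symL, symProd, vecMulVec_apply] using this
  obtain ⟨i0, hi0⟩ : ∃ i, b i ≠ 0 := by
    by_contra hc
    push_neg at hc
    exact hb (funext fun i => hc i)
  have hx0 : x i0 = 0 := by
    have h1 := h i0 i0
    have h2 : x i0 * b i0 = 0 := by nlinarith
    rcases mul_eq_zero.mp h2 with h | h
    · exact h
    · exact absurd h hi0
  funext i
  have h1 := h i i0
  rw [hx0] at h1
  have h2 : x i * b i0 = 0 := by nlinarith
  rcases mul_eq_zero.mp h2 with h | h
  · exact h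
  · exact absurd h hi0

lemma finrank_symLine {n : ℕ} (b : Fin n → ℝ) (hb : b ≠ 0) :
    Module.finrank ℝ (symLine n b) = n := by
  rw [← range_symL]
  rw [LinearMap.finrank_range_of_inj (symL_inj b hb)]
  simp [Module.finrank_fin_fun]

/-- For `n ≥ 2`, nonzero `b ∈ ℝⁿ` and an `n`-dimensional subspace `S` of
symmetric `n × n` matrices, `S = ℝⁿ ∨ b` iff `A b = 0` for every `A` in the orthogonal
complement of `S` inside the symmetric matrices (w.r.t. the Frobenius inner product). -/
theorem stmt12 {n : ℕ} (hn : 2 ≤ n) (b : Fin n → ℝ) (hb : b ≠ 0)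
    (S : Submodule ℝ (Matrix (Fin n) (Fin n) ℝ)) (hSsym : ∀ A ∈ S, A.IsSymm)
    (hdim : Module.finrank ℝ S = n) :
    S = symLine n b ↔
      ∀ A : Matrix (Fin n) (Fin n) ℝ, A.IsSymm → (∀ B ∈ S, frob A B = 0) →
        A.mulVec b = 0 := by
  constructor
  · rintro rfl A hA hfr
    have h := hfr (symProd (A.mulVec b) b) ⟨A.mulVec b, rfl⟩
    rw [frob_symProd A hA] at h
    have h2 : A.mulVec b ⬝ᵥ A.mulVec b = 0 := by linarith
    exact dotProduct_self_eq_zero.mp h2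
  · intro H
    have hle : symLine n b ≤ S := by
      rintro M ⟨x, rfl⟩
      obtain ⟨y, hy, z, hz, hsum⟩ :=
        (S.map toE.toLinearMap).exists_add_mem_mem_orthogonal (toE (symProd x b))
      obtain ⟨C, hC, rfl⟩ := hy
      simp only [LinearEquiv.coe_coe] at hsum
      set A : Matrix (Fin n) (Fin n) ℝ := symProd x b - C with hAdef
      have hAsym : A.IsSymm := (symProd_isSymm x b).sub (hSsym C hC)
      have heA : toE A = z := by
        rw [hAdef, map_sub, hsum]
        abel
      have hfr : ∀ B ∈ S, frob A B = 0 := by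
        intro B hB
        rw [← inner_toE, heA]
        exact (Submodule.mem_orthogonal' _ z).mp hz (toE B)
          (Submodule.mem_map_of_mem hB)
      have hAb := H A hAsym hfr
      have h0 : frob A (symProd x b) = 0 := by
        rw [frob_symProd A hAsym, hAb]
        simp
      have hz0 : z = 0 := by
      -- ⟪z,z⟫ = 0
        have h1 : ⟪toE A, toE (symProd x b)⟫ = 0 := by rw [inner_toE]; exact h0
        rw [heA, hsum, inner_add_right] at h1
        have h2 : ⟪z, toE C⟫ = 0 := by
          have := (Submodule.mem_orthogonal' _ z).mp hz _ (Submodule.mem_map_of_mem hC)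
          simpa using this
        have h3 : ⟪z, z⟫ = 0 := by linarith [h1, h2]
        exact inner_self_eq_zero.mp h3
      have hw : toE (symProd x b) = toE C := by
        rw [hsum, hz0, add_zero]
      have : symProd x b = C := toE.injective hw
      rw [this]; exact hC
    exact (Submodule.eq_of_le_of_finrank_eq hle
      (by rw [finrank_symLine b hb, hdim])).symm
end
end

section
/- Let u ∈ W_0^{1,∞}(Ω; R^n) on an open bounded Ω ⊆ R^n satisfy Du + (Du)^T ∈ E a.e. in Ω and ∫_Ω u ≠ 0, where E ⊆ Sym(n)\{0}. Then dim span E ≥ n, and moreover span E ⊇ R^n ∨ b where b = ∫_Ω u. -/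
noncomputable section
open Matrix MeasureTheory Metric Filter Topology
open scoped ENNReal NNReal

/-- The (a.e. defined) Jacobian matrix of `u : ℝⁿ → ℝᵐ`. -/
def jac {m n : ℕ} (u : (Fin n → ℝ) → (Fin m → ℝ)) (x : Fin n → ℝ) :
    Matrix (Fin m) (Fin n) ℝ :=
  Matrix.of fun i j => fderiv ℝ u x (Pi.single j 1) i

def dotCLM {n : ℕ} (a : Fin n → ℝ) : (Fin n → ℝ) →L[ℝ] ℝ :=
  LinearMap.toContinuousLinearMap
    { toFun := fun x => ∑ j, a j * x j
      map_add' := by intro x y; simp [mul_add, Finset.sum_add_distrib]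
      map_smul' := by
        intro c x
        simp only [Pi.smul_apply, smul_eq_mul, RingHom.id_apply, Finset.mul_sum]
        congr 1; funext j; ring }

lemma dotCLM_apply {n : ℕ} (a x : Fin n → ℝ) : dotCLM a x = ∑ j, a j * x j := rfl

lemma dotCLM_single {n : ℕ} (a : Fin n → ℝ) (i : Fin n) : dotCLM a (Pi.single i 1) = a i := by
  rw [dotCLM_apply]
  rw [Finset.sum_eq_single i]
  · simp
  · intro j _ hj; simp [Pi.single_apply, hj]
  · simp

lemma dotCLM_bound {n : ℕ} (a x : Fin n → ℝ) : |dotCLM a x| ≤ (∑ j, |a j|) * ‖x‖ := by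
  rw [dotCLM_apply]
  calc |∑ j, a j * x j| ≤ ∑ j, |a j * x j| := Finset.abs_sum_le_sum_abs _ _
    _ ≤ ∑ j, |a j| * ‖x‖ := by
        apply Finset.sum_le_sum
        intro j _
        rw [abs_mul]
        exact mul_le_mul_of_nonneg_left (by
          rw [← Real.norm_eq_abs]; exact norm_le_pi_norm x j) (abs_nonneg _)
    _ = (∑ j, |a j|) * ‖x‖ := by rw [← Finset.sum_mul]

lemma ibp {n : ℕ} (F : (Fin n → ℝ) → ℝ) (C : NNReal) (hF : LipschitzWith C F)
    (hsupp : HasCompactSupport F) (v : Fin n → ℝ) :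
    ∫ x, fderiv ℝ F x v = 0 := by
  obtain ⟨R0, hR0⟩ := hsupp.isBounded.subset_closedBall (0 : Fin n → ℝ)
  set gk : ℕ → (Fin n → ℝ) → ℝ :=
    fun k x => ((k : ℝ) + 1) * (F (x + ((k : ℝ) + 1)⁻¹ • v) - F x) with hgk
  have hk0 : ∀ k : ℕ, (0:ℝ) < (k : ℝ) + 1 := fun k => by positivity
  have hik : ∀ k : ℕ, (0:ℝ) < ((k : ℝ) + 1)⁻¹ := fun k => by positivity
  have hik1 : ∀ k : ℕ, ((k : ℝ) + 1)⁻¹ ≤ 1 := fun k => by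
    rw [inv_le_one_iff₀]; right; exact le_add_of_nonneg_left (Nat.cast_nonneg k)
  have hFc : Continuous F := hF.continuous
  have hint : Integrable F volume := hFc.integrable_of_hasCompactSupport hsupp
  have hintk : ∀ k : ℕ, Integrable (fun x => F (x + ((k : ℝ) + 1)⁻¹ • v)) volume := by
    intro k
    have h1 : Continuous fun x : Fin n → ℝ => F (x + ((k : ℝ) + 1)⁻¹ • v) :=
      hFc.comp (continuous_id.add continuous_const)
    apply h1.integrable_of_hasCompactSupport
    exact hsupp.comp_homeomorph (Homeomorph.addRight (((k : ℝ) + 1)⁻¹ • v))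
  have hgk0 : ∀ k : ℕ, ∫ x, gk k x = 0 := by
    intro k
    rw [hgk]
    simp only
    rw [integral_const_mul, integral_sub (hintk k) hint,
      integral_add_right_eq_self F (((k : ℝ) + 1)⁻¹ • v), sub_self, mul_zero]
  have hlim : ∀ᵐ x : Fin n → ℝ, Tendsto (fun k => gk k x) atTop (𝓝 (fderiv ℝ F x v)) := by
    filter_upwards [hF.ae_differentiableAt] with x hdiff
    have h1 : HasDerivAt (fun t : ℝ => x + t • v) v 0 := by
      simpa using ((hasDerivAt_id (0:ℝ)).smul_const v).const_add x
    have hx0 : x + (0:ℝ) • v = x := by simp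
    have hd2 : HasDerivAt (fun t : ℝ => F (x + t • v)) (fderiv ℝ F x v) 0 := by
      refine HasFDerivAt.comp_hasDerivAt 0 ?_ h1
      rw [hx0]
      exact hdiff.hasFDerivAt
    rw [hasDerivAt_iff_tendsto_slope] at hd2
    have htk : Tendsto (fun k : ℕ => ((k : ℝ) + 1)⁻¹) atTop (𝓝[≠] 0) := by
      apply tendsto_nhdsWithin_of_tendsto_nhds_of_eventually_within
      · exact tendsto_one_div_add_atTop_nhds_zero_nat.congr fun k => one_div _
      · exact Eventually.of_forall fun k => (hik k).ne'
    have := hd2.comp htk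
    apply this.congr
    intro k
    rw [hgk]
    simp only [Function.comp_apply, slope_def_field]
    rw [div_eq_inv_mul, sub_zero, inv_inv, hx0]
  have hbd : ∀ (k : ℕ) (x : Fin n → ℝ), ‖gk k x‖ ≤
      (closedBall (0 : Fin n → ℝ) (R0 + ‖v‖)).indicator (fun _ => (C : ℝ) * ‖v‖) x := by
    intro k x
    by_cases hx : x ∈ closedBall (0 : Fin n → ℝ) (R0 + ‖v‖)
    · rw [Set.indicator_of_mem hx]
      rw [hgk]
      simp only [Real.norm_eq_abs, abs_mul, abs_of_pos (hk0 k)]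
      have h2 : |F (x + ((k : ℝ) + 1)⁻¹ • v) - F x| ≤ (C : ℝ) * (((k : ℝ) + 1)⁻¹ * ‖v‖) := by
        have h3 := hF.dist_le_mul (x + ((k : ℝ) + 1)⁻¹ • v) x
        rw [Real.dist_eq] at h3
        have h4 : dist (x + ((k : ℝ) + 1)⁻¹ • v) x = ((k : ℝ) + 1)⁻¹ * ‖v‖ := by
          rw [dist_eq_norm, add_sub_cancel_left, norm_smul, Real.norm_eq_abs,
            abs_of_pos (hik k)]
        rw [h4] at h3
        exact h3
      calc ((k : ℝ) + 1) * |F (x + ((k : ℝ) + 1)⁻¹ • v) - F x|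
          ≤ ((k : ℝ) + 1) * ((C : ℝ) * (((k : ℝ) + 1)⁻¹ * ‖v‖)) :=
            mul_le_mul_of_nonneg_left h2 (hk0 k).le
        _ = (((k : ℝ) + 1) * ((k : ℝ) + 1)⁻¹) * ((C : ℝ) * ‖v‖) := by ring
        _ = (C : ℝ) * ‖v‖ := by rw [mul_inv_cancel₀ (hk0 k).ne', one_mul]
    · rw [Set.indicator_of_notMem hx]
      rw [mem_closedBall, dist_zero_right, not_le] at hx
      have hFx : F x = 0 := by
        apply image_eq_zero_of_notMem_tsupport
        intro hmem
        have := hR0 hmem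
        rw [mem_closedBall, dist_zero_right] at this
        linarith [norm_nonneg v]
      have hFx2 : F (x + ((k : ℝ) + 1)⁻¹ • v) = 0 := by
        apply image_eq_zero_of_notMem_tsupport
        intro hmem
        have h5 := hR0 hmem
        rw [mem_closedBall, dist_zero_right] at h5
        have h6 : ‖x‖ ≤ ‖x + ((k : ℝ) + 1)⁻¹ • v‖ + ‖((k : ℝ) + 1)⁻¹ • v‖ := by
          have h8 := norm_sub_le (x + ((k : ℝ) + 1)⁻¹ • v) (((k : ℝ) + 1)⁻¹ • v)
          rw [add_sub_cancel_right] at h8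
          exact h8
        have h7 : ‖((k : ℝ) + 1)⁻¹ • v‖ ≤ ‖v‖ := by
          rw [norm_smul, Real.norm_eq_abs, abs_of_pos (hik k)]
          calc ((k : ℝ) + 1)⁻¹ * ‖v‖ ≤ 1 * ‖v‖ :=
            mul_le_mul_of_nonneg_right (hik1 k) (norm_nonneg v)
          _ = ‖v‖ := one_mul _
        linarith
      rw [hgk]
      simp [hFx, hFx2]
  have hmeas : ∀ k : ℕ, AEStronglyMeasurable (gk k) volume := by
    intro k
    apply Continuous.aestronglyMeasurable
    exact continuous_const.mul ((hFc.comp (continuous_id.add continuous_const)).sub hFc)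
  have hboundint : Integrable ((closedBall (0 : Fin n → ℝ) (R0 + ‖v‖)).indicator
      (fun _ => (C : ℝ) * ‖v‖)) volume := by
    rw [integrable_indicator_iff measurableSet_closedBall]
    exact integrableOn_const measure_closedBall_lt_top.ne
  have := tendsto_integral_of_dominated_convergence _ hmeas hboundint
    (fun k => Eventually.of_forall (hbd k)) hlim
  have h0 : Tendsto (fun k : ℕ => ∫ x, gk k x) atTop (𝓝 (0:ℝ)) :=
    tendsto_const_nhds.congr fun k => (hgk0 k).symm
  exact tendsto_nhds_unique this h0

section main
variable {n : ℕ}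

lemma norm_single_le (i : Fin n) : ‖(Pi.single i 1 : Fin n → ℝ)‖ ≤ 1 := by
  apply pi_norm_le_iff_of_nonneg zero_le_one |>.2
  intro j
  rw [Pi.single_apply]
  by_cases h : j = i <;> simp [h]

lemma jac_entry_bound {u : (Fin n → ℝ) → (Fin n → ℝ)} {C : NNReal} (hu : LipschitzWith C u)
    (x : Fin n → ℝ) (k i : Fin n) : |jac u x k i| ≤ (C : ℝ) := by
  have h1 : ‖fderiv ℝ u x‖ ≤ (C : ℝ) := norm_fderiv_le_of_lipschitz ℝ hu
  have h2 : |jac u x k i| ≤ ‖fderiv ℝ u x (Pi.single i 1)‖ := by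
    rw [← Real.norm_eq_abs]
    exact norm_le_pi_norm _ k
  refine h2.trans ?_
  calc ‖fderiv ℝ u x (Pi.single i 1)‖ ≤ ‖fderiv ℝ u x‖ * ‖(Pi.single i 1 : Fin n → ℝ)‖ :=
        (fderiv ℝ u x).le_opNorm _
    _ ≤ (C : ℝ) * 1 := mul_le_mul h1 (norm_single_le i) (norm_nonneg _) C.coe_nonneg
    _ = (C : ℝ) := mul_one _

variable {u : (Fin n → ℝ) → (Fin n → ℝ)} {C : NNReal} {Ω : Set (Fin n → ℝ)} {R : ℝ}

lemma fderiv_zero_outside (hu0 : ∀ x ∉ Ω, u x = 0) (hΩR : Ω ⊆ closedBall 0 R)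
    {x : Fin n → ℝ} (hx : x ∉ closedBall (0 : Fin n → ℝ) R) : fderiv ℝ u x = 0 := by
  have hev : u =ᶠ[𝓝 x] fun _ => (0 : Fin n → ℝ) := by
    filter_upwards [IsOpen.mem_nhds (isOpen_compl_iff.mpr isClosed_closedBall) hx] with y hy
    exact hu0 y fun hyΩ => hy (hΩR hyΩ)
  rw [hev.fderiv_eq]
  exact fderiv_const_apply _

lemma u_norm_bound (hn : 0 < n) (hu : LipschitzWith C u) (hu0 : ∀ x ∉ Ω, u x = 0)
    (hR : 0 < R) (hΩR : Ω ⊆ closedBall 0 R) (x : Fin n → ℝ) :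
    ‖u x‖ ≤ (C : ℝ) * (3 * R + 1) := by
  haveI : Nonempty (Fin n) := Fin.pos_iff_nonempty.1 hn
  by_cases hx : u x = 0
  · rw [hx, norm_zero]; positivity
  · have hxΩ : x ∈ Ω := by by_contra h; exact hx (hu0 x h)
    have hxR : ‖x‖ ≤ R := by
      have := hΩR hxΩ; rwa [mem_closedBall, dist_zero_right] at this
    set z : Fin n → ℝ := fun _ => 2 * R + 1 with hz
    have hzn : ‖z‖ = 2 * R + 1 := by
      rw [hz, pi_norm_const, Real.norm_eq_abs, abs_of_pos (by linarith)]
    have hzΩ : z ∉ Ω := by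
      intro h
      have := hΩR h; rw [mem_closedBall, dist_zero_right, hzn] at this; linarith
    have huz : u z = 0 := hu0 z hzΩ
    calc ‖u x‖ = dist (u x) (u z) := by rw [huz, dist_eq_norm, sub_zero]
      _ ≤ (C : ℝ) * dist x z := hu.dist_le_mul x z
      _ ≤ (C : ℝ) * (‖x‖ + ‖z‖) := mul_le_mul_of_nonneg_left
          (by rw [dist_eq_norm]; exact norm_sub_le x z) C.coe_nonneg
      _ ≤ (C : ℝ) * (3 * R + 1) := by
          apply mul_le_mul_of_nonneg_left _ C.coe_nonneg
          rw [hzn]; linarith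

lemma supp_in_ball (hu0 : ∀ x ∉ Ω, u x = 0) (hΩR : Ω ⊆ closedBall 0 R)
    {x : Fin n → ℝ} (hx : u x ≠ 0) : ‖x‖ ≤ R := by
  have hxΩ : x ∈ Ω := by by_contra h; exact hx (hu0 x h)
  have := hΩR hxΩ; rwa [mem_closedBall, dist_zero_right] at this

lemma uk_lipschitz (hu : LipschitzWith C u) (k : Fin n) :
    LipschitzWith C (fun x => u x k) := by
  apply LipschitzWith.of_dist_le_mul
  intro x y
  exact le_trans (dist_le_pi_dist (u x) (u y) k) (hu.dist_le_mul x y)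


lemma entry_integrable (hu : LipschitzWith C u) (hu0 : ∀ x ∉ Ω, u x = 0)
    (hR : 0 < R) (hΩR : Ω ⊆ closedBall 0 R) (a : Fin n → ℝ) (k i : Fin n) :
    Integrable (fun x => dotCLM a x * jac u x k i) (volume : Measure (Fin n → ℝ)) := by
  set A := ∑ j, |a j| with hA
  have hA0 : 0 ≤ A := Finset.sum_nonneg fun j _ => abs_nonneg _
  apply Integrable.mono' (g := (closedBall (0 : Fin n → ℝ) R).indicator
    (fun _ => A * R * (C : ℝ)))
  · rw [integrable_indicator_iff measurableSet_closedBall]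
    exact integrableOn_const measure_closedBall_lt_top.ne
  · apply AEStronglyMeasurable.mul (dotCLM a).continuous.aestronglyMeasurable
    have hmeas : Measurable fun x : Fin n → ℝ => fderiv ℝ u x (Pi.single i 1) :=
      measurable_fderiv_apply_const ℝ u (Pi.single i 1)
    exact ((continuous_apply k).measurable.comp hmeas).aestronglyMeasurable
  · apply Eventually.of_forall
    intro x
    by_cases hx : x ∈ closedBall (0 : Fin n → ℝ) R
    · rw [Set.indicator_of_mem hx, Real.norm_eq_abs, abs_mul]
      rw [mem_closedBall, dist_zero_right] at hx
      apply mul_le_mul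
      · exact (dotCLM_bound a x).trans (mul_le_mul_of_nonneg_left hx hA0)
      · exact jac_entry_bound hu x k i
      · exact abs_nonneg _
      · positivity
    · rw [Set.indicator_of_notMem hx]
      have h0 : fderiv ℝ u x = 0 := fderiv_zero_outside hu0 hΩR hx
      have h1 : jac u x k i = 0 := by simp [jac, h0]
      rw [h1, mul_zero, norm_zero]

-- the key entry identity
lemma entry_identity (hn : 0 < n) (hu : LipschitzWith C u) (hu0 : ∀ x ∉ Ω, u x = 0)
    (hR : 0 < R) (hΩR : Ω ⊆ closedBall 0 R) (a : Fin n → ℝ) (k i : Fin n) :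
    ∫ x, dotCLM a x * jac u x k i = -(a i * ∫ x, u x k) := by
  set A := ∑ j, |a j| with hA
  have hA0 : 0 ≤ A := Finset.sum_nonneg fun j _ => abs_nonneg _
  set Mu := (C : ℝ) * (3 * R + 1) with hMu
  have hMu0 : 0 ≤ Mu := by positivity
  have hucomp : ∀ x : Fin n → ℝ, |u x k| ≤ ‖u x‖ := by
    intro x
    rw [← Real.norm_eq_abs]
    exact norm_le_pi_norm (u x) k
  have hukM : ∀ x : Fin n → ℝ, |u x k| ≤ Mu :=
    fun x => (hucomp x).trans (u_norm_bound hn hu hu0 hR hΩR x)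
  set F := fun x : Fin n → ℝ => dotCLM a x * u x k with hF
  have hlipmain : ∀ x y : Fin n → ℝ, u y k ≠ 0 →
      |F x - F y| ≤ (A * Mu + A * R * (C : ℝ)) * ‖x - y‖ := by
    intro x y hy
    have hyR : ‖y‖ ≤ R := supp_in_ball hu0 hΩR (fun h => hy (by rw [h]; rfl))
    have e1 : F x - F y = dotCLM a (x - y) * u x k + dotCLM a y * (u x k - u y k) := by
      rw [hF]; simp only [map_sub]; ring
    have e2 : |dotCLM a (x - y) * u x k| ≤ A * ‖x - y‖ * Mu := by
      rw [abs_mul]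
      exact mul_le_mul (dotCLM_bound a _) (hukM x) (abs_nonneg _) (by positivity)
    have e3 : |dotCLM a y * (u x k - u y k)| ≤ A * R * ((C : ℝ) * ‖x - y‖) := by
      rw [abs_mul]
      apply mul_le_mul
      · exact (dotCLM_bound a y).trans (mul_le_mul_of_nonneg_left hyR hA0)
      · have := (uk_lipschitz hu k).dist_le_mul x y
        rwa [Real.dist_eq, dist_eq_norm] at this
      · exact abs_nonneg _
      · positivity
    calc |F x - F y| ≤ |dotCLM a (x - y) * u x k| + |dotCLM a y * (u x k - u y k)| := by
          rw [e1]; exact abs_add_le _ _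
      _ ≤ A * ‖x - y‖ * Mu + A * R * ((C : ℝ) * ‖x - y‖) := add_le_add e2 e3
      _ = (A * Mu + A * R * (C : ℝ)) * ‖x - y‖ := by ring
  have hlip : LipschitzWith (Real.toNNReal (A * Mu + A * R * (C : ℝ))) F := by
    apply LipschitzWith.of_dist_le_mul
    intro x y
    rw [Real.dist_eq, Real.coe_toNNReal _ (by positivity), dist_eq_norm]
    by_cases h1 : u y k = 0
    · by_cases h2 : u x k = 0
      · rw [hF]; simp only [h1, h2, mul_zero, sub_zero, abs_zero]
        positivity
      · have := hlipmain y x h2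
        rwa [abs_sub_comm, norm_sub_rev] at this
    · exact hlipmain x y h1
  have hFsupp : HasCompactSupport F := by
    apply HasCompactSupport.intro (isCompact_closedBall (0 : Fin n → ℝ) R)
    intro x hx
    rw [mem_closedBall, dist_zero_right, not_le] at hx
    have hux : u x = 0 := by
      by_contra h
      exact absurd (supp_in_ball hu0 hΩR h) (not_le.2 hx)
    rw [hF]; simp [hux]
  have hibp := ibp F _ hlip hFsupp (Pi.single i 1)
  have hae : ∀ᵐ x : Fin n → ℝ, fderiv ℝ F x (Pi.single i 1)
      = a i * u x k + dotCLM a x * jac u x k i := by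
    filter_upwards [hu.ae_differentiableAt] with x hdx
    have h2 : HasFDerivAt (fun y => u y k)
        ((ContinuousLinearMap.proj k).comp (fderiv ℝ u x)) x := by
      exact HasFDerivAt.comp x ((ContinuousLinearMap.proj k : (Fin n → ℝ) →L[ℝ] ℝ).hasFDerivAt) hdx.hasFDerivAt
    have h3 := ((dotCLM a).hasFDerivAt (x := x)).mul h2
    rw [hF]
    rw [HasFDerivAt.fderiv (f := fun x => dotCLM a x * u x k) h3]
    simp only [ContinuousLinearMap.add_apply, ContinuousLinearMap.coe_smul',
      Pi.smul_apply, ContinuousLinearMap.coe_comp', Function.comp_apply,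
      ContinuousLinearMap.proj_apply, smul_eq_mul, dotCLM_single]
    simp only [jac, Matrix.of_apply]
    ring
  have hintu : Integrable (fun x => u x k) (volume : Measure (Fin n → ℝ)) := by
    apply Continuous.integrable_of_hasCompactSupport
      ((continuous_apply k).comp hu.continuous)
    apply HasCompactSupport.intro (isCompact_closedBall (0 : Fin n → ℝ) R)
    intro x hx
    rw [mem_closedBall, dist_zero_right, not_le] at hx
    have hux : u x = 0 := by
      by_contra h
      exact absurd (supp_in_ball hu0 hΩR h) (not_le.2 hx)
    simp [Function.comp_apply, hux]
  have hint2 : Integrable (fun x => dotCLM a x * jac u x k i)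
      (volume : Measure (Fin n → ℝ)) := by
    apply Integrable.mono' (g := (closedBall (0 : Fin n → ℝ) R).indicator
      (fun _ => A * R * (C : ℝ)))
    · rw [integrable_indicator_iff measurableSet_closedBall]
      exact integrableOn_const measure_closedBall_lt_top.ne
    · apply AEStronglyMeasurable.mul (dotCLM a).continuous.aestronglyMeasurable
      have hmeas : Measurable fun x : Fin n → ℝ => fderiv ℝ u x (Pi.single i 1) :=
        measurable_fderiv_apply_const ℝ u (Pi.single i 1)
      exact ((continuous_apply k).measurable.comp hmeas).aestronglyMeasurable
    · apply Eventually.of_forall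
      intro x
      by_cases hx : x ∈ closedBall (0 : Fin n → ℝ) R
      · rw [Set.indicator_of_mem hx, Real.norm_eq_abs, abs_mul]
        rw [mem_closedBall, dist_zero_right] at hx
        apply mul_le_mul
        · exact (dotCLM_bound a x).trans (mul_le_mul_of_nonneg_left hx hA0)
        · exact jac_entry_bound hu x k i
        · exact abs_nonneg _
        · positivity
      · rw [Set.indicator_of_notMem hx]
        have h0 : fderiv ℝ u x = 0 := fderiv_zero_outside hu0 hΩR hx
        have : jac u x k i = 0 := by simp [jac, h0]
        rw [this, mul_zero, norm_zero]
  have heq : (0:ℝ) = a i * (∫ x, u x k) + ∫ x, dotCLM a x * jac u x k i := by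
    rw [← integral_const_mul, ← integral_add (hintu.const_mul _) hint2, ← hibp]
    exact integral_congr_ae hae
  linarith [heq]

end main

lemma fderiv_zero_at_density_pt {n m : ℕ} {f : (Fin n → ℝ) → (Fin m → ℝ)} {A : Set (Fin n → ℝ)}
    (hf0 : ∀ y ∈ A, f y = 0) {x : Fin n → ℝ} (hx : x ∈ A)
    (hd : Tendsto (fun r => volume (A ∩ closedBall x r) / volume (closedBall x r))
      (𝓝[>] (0:ℝ)) (𝓝 1)) :
    fderiv ℝ f x = 0 := by
  by_cases hdiff : DifferentiableAt ℝ f x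
  swap
  · exact fderiv_zero_of_not_differentiableAt hdiff
  set L := fderiv ℝ f x with hL
  by_contra hLne
  obtain ⟨w, hw⟩ : ∃ w, L w ≠ 0 := by
    by_contra h; push_neg at h; exact hLne (ContinuousLinearMap.ext fun w => h w)
  set c := ‖L w‖ with hc
  have hc0 : 0 < c := norm_pos_iff.2 hw
  set ε := c / (4 * (‖L‖ + 1)) with hε
  have hε0 : 0 < ε := div_pos hc0 (mul_pos (by norm_num) (by positivity))
  have hwε : 0 < ‖w‖ + ε := by positivity
  set ρ := ε / (‖w‖ + ε) with hρ
  have hρ0 : 0 < ρ := div_pos hε0 hwε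
  have hρ1 : ρ ≤ 1 := by
    rw [hρ, div_le_one hwε]; nlinarith [norm_nonneg w]
  set θ := ENNReal.ofReal (ρ ^ n) with hθ
  have hρn0 : 0 < ρ ^ n := pow_pos hρ0 n
  have hθ0 : 0 < θ := ENNReal.ofReal_pos.2 hρn0
  have hθ1 : θ ≤ 1 := by
    rw [hθ, ← ENNReal.ofReal_one]
    exact ENNReal.ofReal_le_ofReal (pow_le_one₀ hρ0.le hρ1)
  set ε' := c / (4 * (‖w‖ + ε)) with hε'
  have hε'0 : 0 < ε' := div_pos hc0 (mul_pos (by norm_num) hwε)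
  clear_value c ε ρ θ ε'
  have h1 : Tendsto (fun t : ℝ => (‖w‖ + ε) * t) (𝓝[>] 0) (𝓝[>] 0) := by
    apply tendsto_nhdsWithin_of_tendsto_nhds_of_eventually_within
    · have := (tendsto_id (x := 𝓝 (0:ℝ))).const_mul (‖w‖ + ε)
      simpa using this.mono_left nhdsWithin_le_nhds
    · filter_upwards [self_mem_nhdsWithin] with t ht
      exact mul_pos hwε ht
  have hd2 := hd.comp h1
  have hev1 : ∀ᶠ t in 𝓝[>] (0:ℝ),
      1 - θ < volume (A ∩ closedBall x ((‖w‖ + ε) * t)) / volume (closedBall x ((‖w‖ + ε) * t)) := by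
    have hlt : (1:ℝ≥0∞) - θ < 1 := ENNReal.sub_lt_self ENNReal.one_ne_top one_ne_zero hθ0.ne'
    exact hd2.eventually (eventually_gt_nhds hlt)
  have dimeq : Module.finrank ℝ (Fin n → ℝ) = n := Module.finrank_fin_fun ℝ
  have hclaim : ∀ᶠ t in 𝓝[>] (0:ℝ), ∃ y ∈ A, dist y (x + t • w) ≤ ε * t := by
    filter_upwards [hev1, self_mem_nhdsWithin] with t hratio ht
    replace ht : 0 < t := ht
    by_contra hempty
    push_neg at hempty
    have hsub : closedBall (x + t • w) (ε * t) ⊆ closedBall x ((‖w‖ + ε) * t) := by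
      intro y hy
      have h2 : dist y x ≤ dist y (x + t • w) + dist (x + t • w) x := dist_triangle _ _ _
      have h3 : dist (x + t • w) x = t * ‖w‖ := by
        rw [dist_eq_norm]; simp [norm_smul, abs_of_pos ht]
      have h4 := mem_closedBall.1 hy
      rw [h3] at h2
      rw [mem_closedBall, show (‖w‖ + ε) * t = ε * t + t * ‖w‖ by ring]
      linarith
    have hSA : A ∩ closedBall x ((‖w‖ + ε) * t) ⊆
        closedBall x ((‖w‖ + ε) * t) \ closedBall (x + t • w) (ε * t) := by
      rintro y ⟨hyA, hyB⟩
      refine ⟨hyB, fun hyS => ?_⟩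
      rw [mem_closedBall] at hyS
      exact absurd hyS (not_le.2 (hempty y hyA))
    have hμS : volume (closedBall (x + t • w) (ε * t)) = θ * volume (closedBall x ((‖w‖ + ε) * t)) := by
      rw [Measure.addHaar_closedBall _ _ (mul_pos hε0 ht).le,
        Measure.addHaar_closedBall _ _ (mul_pos hwε ht).le, dimeq, hθ, ← mul_assoc,
        ← ENNReal.ofReal_mul hρn0.le, ← mul_pow,
        show ρ * ((‖w‖ + ε) * t) = ε * t by rw [hρ]; field_simp]
    have hμB_ne : volume (closedBall x ((‖w‖ + ε) * t)) ≠ 0 := (measure_closedBall_pos _ _ (mul_pos hwε ht)).ne'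
    have hμB_top : volume (closedBall x ((‖w‖ + ε) * t)) ≠ ⊤ := measure_closedBall_lt_top.ne
    have hub : volume (A ∩ closedBall x ((‖w‖ + ε) * t)) ≤
        volume (closedBall x ((‖w‖ + ε) * t)) - volume (closedBall (x + t • w) (ε * t)) := by
      refine le_trans (measure_mono hSA) ?_
      rw [measure_diff hsub measurableSet_closedBall.nullMeasurableSet
        (lt_of_le_of_lt (measure_mono hsub) measure_closedBall_lt_top).ne]
    have hlb : (1 - θ) * volume (closedBall x ((‖w‖ + ε) * t)) <
        volume (A ∩ closedBall x ((‖w‖ + ε) * t)) := by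
      rwa [← ENNReal.lt_div_iff_mul_lt (Or.inl hμB_ne) (Or.inl hμB_top)]
    have hfinal : volume (closedBall x ((‖w‖ + ε) * t)) - volume (closedBall (x + t • w) (ε * t)) ≤
        (1 - θ) * volume (closedBall x ((‖w‖ + ε) * t)) := by
      rw [hμS, tsub_le_iff_right, ← add_mul, tsub_add_cancel_of_le hθ1, one_mul]
    exact absurd (lt_of_lt_of_le hlb (le_trans hub hfinal)) (lt_irrefl _)
  -- little-o part
  have hlo := hdiff.hasFDerivAt.isLittleO.def hε'0
  rw [Metric.eventually_nhds_iff] at hlo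
  obtain ⟨δ, hδ0, hδ⟩ := hlo
  have hsmall : ∀ᶠ t in 𝓝[>] (0:ℝ), (‖w‖ + ε) * t < δ :=
    (h1.mono_right nhdsWithin_le_nhds).eventually (eventually_lt_nhds hδ0)
  obtain ⟨t, ⟨⟨y, hyA, hyd⟩, htδ⟩, ht0⟩ := ((hclaim.and hsmall).and self_mem_nhdsWithin).exists
  replace ht0 : 0 < t := ht0
  have h3 : dist (x + t • w) x = t * ‖w‖ := by
    rw [dist_eq_norm]; simp [norm_smul, abs_of_pos ht0]
  have h2 : dist y x ≤ dist y (x + t • w) + dist (x + t • w) x := dist_triangle _ _ _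
  have hdyx : dist y x < δ := by
    rw [h3] at h2
    have hexp : (‖w‖ + ε) * t = ε * t + t * ‖w‖ := by ring
    rw [hexp] at htδ
    linarith
  have key := hδ hdyx
  rw [hf0 y hyA, hf0 x hx, ← hL] at key
  rw [sub_zero, zero_sub, norm_neg] at key
  have hyx : ‖y - x‖ ≤ (‖w‖ + ε) * t := by
    rw [← dist_eq_norm]
    have hexp : (‖w‖ + ε) * t = ε * t + t * ‖w‖ := by ring
    rw [hexp]
    linarith
  have key2 : ‖L (y - x)‖ ≤ ε' * ((‖w‖ + ε) * t) :=
    le_trans key (mul_le_mul_of_nonneg_left hyx hε'0.le)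
  have e2 : ‖L (t • w)‖ = t * c := by rw [_root_.map_smul, norm_smul, Real.norm_eq_abs, abs_of_pos ht0, hc]
  have e3 : ‖L (y - x - t • w)‖ ≤ ‖L‖ * (ε * t) := by
    calc ‖L (y - x - t • w)‖ ≤ ‖L‖ * ‖y - x - t • w‖ := L.le_opNorm _
      _ ≤ ‖L‖ * (ε * t) := by
          apply mul_le_mul_of_nonneg_left _ (norm_nonneg L)
          have hh : y - x - t • w = y - (x + t • w) := by abel
          rw [hh, ← dist_eq_norm]; exact hyd
  have e4 : ‖L (t • w)‖ ≤ ‖L (y - x)‖ + ‖L (y - x - t • w)‖ := by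
    have hh : L (t • w) = L (y - x) - L (y - x - t • w) := by
      rw [← map_sub]; congr 1; abel
    rw [hh]; exact norm_sub_le _ _
  have e5 : t * c ≤ ‖L (y - x)‖ + ‖L‖ * (ε * t) := by
    rw [← e2]; linarith
  have hA : ε' * ((‖w‖ + ε) * t) = c / 4 * t := by
    rw [hε']; field_simp
  have hB2 : ‖L‖ * ε ≤ c / 4 := by
    rw [hε, mul_div_assoc', div_le_div_iff₀ (by positivity) (by norm_num : (0:ℝ) < 4)]
    linarith [mul_le_mul_of_nonneg_right hc0.le (norm_nonneg L)]
  have hLεt : ‖L‖ * (ε * t) ≤ c / 4 * t := by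
    rw [← mul_assoc]
    exact mul_le_mul_of_nonneg_right hB2 ht0.le
  linarith [e5, key2, hA, hLεt, mul_pos ht0 hc0]

/-- If `u ∈ W₀^{1,∞}(Ω; ℝⁿ)` on an open bounded `Ω ⊆ ℝⁿ` satisfies
`Du + (Du)ᵀ ∈ E` a.e. in `Ω` with `E ⊆ Sym(n) \ {0}` and `∫_Ω u ≠ 0`, then
`dim span E ≥ n` and `span E ⊇ ℝⁿ ∨ b` where `b = ∫_Ω u`. -/
theorem stmt15 {n : ℕ} (Ω : Set (Fin n → ℝ)) (hΩo : IsOpen Ω)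
    (hΩb : Bornology.IsBounded Ω)
    (E : Set (Matrix (Fin n) (Fin n) ℝ))
    (hE : ∀ A ∈ E, A.IsSymm ∧ A ≠ 0)
    (u : (Fin n → ℝ) → (Fin n → ℝ)) (C : NNReal) (hu : LipschitzWith C u)
    (hu0 : ∀ x ∉ Ω, u x = 0)
    (hincl : ∀ᵐ x ∂(volume : Measure (Fin n → ℝ)), x ∈ Ω → jac u x + (jac u x)ᵀ ∈ E)
    (hint : (∫ x in Ω, u x) ≠ 0) :
    n ≤ Module.finrank ℝ (Submodule.span ℝ E) ∧
      symLine n (∫ x in Ω, u x) ≤ Submodule.span ℝ E := by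
  rcases Nat.eq_zero_or_pos n with hn0 | hn
  · subst hn0
    exact absurd (Subsingleton.elim _ _) hint
  obtain ⟨R', hR'⟩ := hΩb.subset_closedBall 0
  set R := max R' 1 with hRdef
  have hR : 0 < R := lt_of_lt_of_le one_pos (le_max_right _ _)
  have hΩR : Ω ⊆ closedBall 0 R := hR'.trans (closedBall_subset_closedBall (le_max_left _ _))
  set b := ∫ x in Ω, u x with hb
  have hbint : Integrable u (volume : Measure (Fin n → ℝ)) := by
    apply hu.continuous.integrable_of_hasCompactSupport
    apply HasCompactSupport.intro (isCompact_closedBall (0 : Fin n → ℝ) R)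
    intro x hx
    rw [mem_closedBall, dist_zero_right, not_le] at hx
    by_contra h
    exact absurd (supp_in_ball hu0 hΩR h) (not_le.2 hx)
  have hbeq : b = ∫ x, u x :=
    setIntegral_eq_integral_of_forall_compl_eq_zero (fun x hx => hu0 x hx)
  have hbk : ∀ k, b k = ∫ x, u x k := by
    intro k
    rw [hbeq]
    exact (ContinuousLinearMap.integral_comp_comm
      (ContinuousLinearMap.proj k : (Fin n → ℝ) →L[ℝ] ℝ) hbint).symm
  have hΩc : ∀ᵐ x : Fin n → ℝ, x ∉ Ω → fderiv ℝ u x = 0 := by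
    have hd := Besicovitch.ae_tendsto_measure_inter_div (volume : Measure (Fin n → ℝ)) Ωᶜ
    rw [ae_restrict_iff' hΩo.isClosed_compl.measurableSet] at hd
    filter_upwards [hd] with x hx hxn
    exact fderiv_zero_at_density_pt (fun y hy => hu0 y hy) hxn (hx hxn)
  have hMmem : ∀ᵐ x : Fin n → ℝ, jac u x + (jac u x)ᵀ ∈ Submodule.span ℝ E := by
    filter_upwards [hincl, hΩc] with x h1 h2
    by_cases hxΩ : x ∈ Ω
    · exact Submodule.subset_span (h1 hxΩ)
    · have h3 := h2 hxΩ
      have h4 : jac u x = 0 := by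
        ext p q; simp [jac, h3]
      rw [h4]
      simp only [Matrix.transpose_zero, add_zero]
      exact Submodule.zero_mem _
  have key : ∀ a : Fin n → ℝ, symProd a b ∈ Submodule.span ℝ E := by
    intro a
    by_contra hns
    set S := Submodule.span ℝ E with hS
    have hq : S.mkQ (symProd a b) ≠ 0 := by
      intro h0
      exact hns ((Submodule.Quotient.mk_eq_zero S).1 h0)
    obtain ⟨ψ, hψ⟩ : ∃ ψ : Module.Dual ℝ (Matrix (Fin n) (Fin n) ℝ ⧸ S),
        ψ (S.mkQ (symProd a b)) ≠ 0 := by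
      by_contra h
      push_neg at h
      exact hq ((Module.forall_dual_apply_eq_zero_iff ℝ _).1 h)
    set φ : Matrix (Fin n) (Fin n) ℝ →ₗ[ℝ] ℝ := ψ.comp S.mkQ with hφ
    have hφS : ∀ M ∈ S, φ M = 0 := by
      intro M hM
      rw [hφ]
      simp only [LinearMap.comp_apply]
      rw [show S.mkQ M = 0 from (Submodule.Quotient.mk_eq_zero S).2 hM, map_zero]
    have hsum : ∀ M : Matrix (Fin n) (Fin n) ℝ,
        φ M = ∑ p, ∑ q, M p q * φ (Matrix.single p q 1) := by
      intro M
      conv_lhs => rw [matrix_eq_sum_single M]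
      rw [map_sum]
      refine Finset.sum_congr rfl fun p _ => ?_
      rw [map_sum]
      refine Finset.sum_congr rfl fun q _ => ?_
      have h5 : Matrix.single p q (M p q) = M p q • Matrix.single p q 1 := by
        rw [smul_single, smul_eq_mul, mul_one]
      rw [h5, _root_.map_smul, smul_eq_mul]
    have hMint : ∀ p q : Fin n, Integrable
        (fun x => dotCLM a x * ((jac u x + (jac u x)ᵀ) p q) * φ (Matrix.single p q 1))
        (volume : Measure (Fin n → ℝ)) := by
      intro p q
      have h6 : (fun x => dotCLM a x * ((jac u x + (jac u x)ᵀ) p q))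
          = fun x => dotCLM a x * jac u x p q + dotCLM a x * jac u x q p := by
        funext x
        simp only [Matrix.add_apply, Matrix.transpose_apply]
        ring
      apply Integrable.mul_const
      rw [h6]
      exact (entry_integrable hu hu0 hR hΩR a p q).add (entry_integrable hu hu0 hR hΩR a q p)
    have hzero : ∫ x, dotCLM a x * φ (jac u x + (jac u x)ᵀ) = 0 := by
      apply integral_eq_zero_of_ae
      filter_upwards [hMmem] with x hx
      rw [hφS _ hx, mul_zero]
      rfl
    have hexpand : ∫ x, dotCLM a x * φ (jac u x + (jac u x)ᵀ)
        = ∑ p, ∑ q, (∫ x, dotCLM a x * ((jac u x + (jac u x)ᵀ) p q))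
            * φ (Matrix.single p q 1) := by
      have h7 : ∀ x : Fin n → ℝ, dotCLM a x * φ (jac u x + (jac u x)ᵀ)
          = ∑ p, ∑ q, dotCLM a x * ((jac u x + (jac u x)ᵀ) p q) * φ (Matrix.single p q 1) := by
        intro x
        rw [hsum (jac u x + (jac u x)ᵀ), Finset.mul_sum]
        refine Finset.sum_congr rfl fun p _ => ?_
        rw [Finset.mul_sum]
        refine Finset.sum_congr rfl fun q _ => ?_
        ring
      rw [integral_congr_ae (Eventually.of_forall h7)]
      rw [integral_finset_sum _ (fun p _ => integrable_finset_sum _ (fun q _ => hMint p q))]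
      refine Finset.sum_congr rfl fun p _ => ?_
      rw [integral_finset_sum _ (fun q _ => hMint p q)]
      refine Finset.sum_congr rfl fun q _ => ?_
      rw [← integral_mul_const]
    have hentry : ∀ p q : Fin n, (∫ x, dotCLM a x * ((jac u x + (jac u x)ᵀ) p q))
        = -(symProd a b) p q := by
      intro p q
      have h6 : (fun x => dotCLM a x * ((jac u x + (jac u x)ᵀ) p q))
          = fun x => dotCLM a x * jac u x p q + dotCLM a x * jac u x q p := by
        funext x
        simp only [Matrix.add_apply, Matrix.transpose_apply]
        ring
      rw [h6, integral_add (entry_integrable hu hu0 hR hΩR a p q) (entry_integrable hu hu0 hR hΩR a q p),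
        entry_identity hn hu hu0 hR hΩR a p q, entry_identity hn hu hu0 hR hΩR a q p]
      simp only [symProd, Matrix.add_apply, vecMulVec_apply, Matrix.neg_apply]
      rw [hbk p, hbk q]
      ring
    have hfinal : φ (symProd a b) = 0 := by
      rw [hsum (symProd a b)]
      have h8 : ∀ p q : Fin n, (symProd a b) p q * φ (Matrix.single p q 1)
          = -((∫ x, dotCLM a x * ((jac u x + (jac u x)ᵀ) p q)) * φ (Matrix.single p q 1)) := by
        intro p q
        rw [hentry p q]
        ring
      calc ∑ p, ∑ q, (symProd a b) p q * φ (Matrix.single p q 1)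
          = -∑ p, ∑ q, (∫ x, dotCLM a x * ((jac u x + (jac u x)ᵀ) p q))
              * φ (Matrix.single p q 1) := by
            rw [← Finset.sum_neg_distrib]
            refine Finset.sum_congr rfl fun p _ => ?_
            rw [← Finset.sum_neg_distrib]
            exact Finset.sum_congr rfl fun q _ => h8 p q
        _ = -(∫ x, dotCLM a x * φ (jac u x + (jac u x)ᵀ)) := by rw [hexpand]
        _ = 0 := by rw [hzero, neg_zero]
    exact hψ hfinal
  constructor
  · -- dimension bound
    have hbne : b ≠ 0 := hint
    set ψl : (Fin n → ℝ) →ₗ[ℝ] Matrix (Fin n) (Fin n) ℝ :=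
      { toFun := fun a => symProd a b
        map_add' := by
          intro x y
          ext p q
          simp [symProd, vecMulVec_apply]
          ring
        map_smul' := by
          intro c x
          ext p q
          simp [symProd, vecMulVec_apply]
          ring } with hψl
    have h0 : ∀ a, ψl a = 0 → a = 0 := by
      intro a ha
      obtain ⟨j0, hj0⟩ := Function.ne_iff.1 hbne
      have h1 : ∀ p q, a p * b q + b p * a q = 0 := by
        intro p q
        have h2 : (ψl a) p q = (0 : Matrix (Fin n) (Fin n) ℝ) p q := by rw [ha]
        simpa [hψl, symProd, vecMulVec_apply] using h2
      have hj : a j0 = 0 := by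
        have h2 := h1 j0 j0
        have h3 : a j0 * b j0 = 0 := by linarith
        rcases mul_eq_zero.1 h3 with h | h
        · exact h
        · exact absurd h hj0
      funext p
      have h3 := h1 p j0
      rw [hj, mul_zero, add_zero] at h3
      rcases mul_eq_zero.1 h3 with h | h
      · exact h
      · exact absurd h hj0
    have hinj : Function.Injective ψl :=
      LinearMap.ker_eq_bot.1 (LinearMap.ker_eq_bot'.2 h0)
    have hle : LinearMap.range ψl ≤ Submodule.span ℝ E := by
      rintro M ⟨a, rfl⟩
      exact key a
    calc n = Module.finrank ℝ (Fin n → ℝ) := (Module.finrank_fin_fun ℝ).symm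
      _ = Module.finrank ℝ (LinearMap.range ψl) := (LinearMap.finrank_range_of_inj hinj).symm
      _ ≤ Module.finrank ℝ (Submodule.span ℝ E) := Submodule.finrank_mono hle
  · intro M hM
    obtain ⟨a, rfl⟩ := hM
    exact key a
end
end

section
/- Let a, b, c, d be nonzero vectors in R^n. The set {a ∨ b, c ∨ d} of symmetric matrices is linearly dependent if and only if either ({a,c} is linearly dependent and {b,d} is linearly dependent) or ({a,d} is linearly dependent and {b,c} is linearly dependent). -/
noncomputable section
open Matrix

namespace Stmt17Aux

variable {n : ℕ}

lemma pair_dep_iff {M : Type*} [AddCommGroup M] [Module ℝ M] {x y : M}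
    (hx : x ≠ 0) (hy : y ≠ 0) :
    ¬ LinearIndependent ℝ ![x, y] ↔ ∃ t : ℝ, t ≠ 0 ∧ y = t • x := by
  constructor
  · intro h
    rw [linearIndependent_fin2] at h
    push_neg at h
    simp only [Matrix.cons_val_one, Matrix.head_cons, Matrix.cons_val_zero] at h
    obtain ⟨s, hs⟩ := h hy
    have hs0 : s ≠ 0 := by rintro rfl; simp at hs; exact hx hs.symm
    exact ⟨s⁻¹, inv_ne_zero hs0, by rw [← hs, smul_smul, inv_mul_cancel₀ hs0, one_smul]⟩
  · rintro ⟨t, ht, rfl⟩ hLI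
    rw [linearIndependent_fin2] at hLI
    simp only [Matrix.cons_val_one, Matrix.head_cons, Matrix.cons_val_zero] at hLI
    exact hLI.2 t⁻¹ (by rw [smul_smul, inv_mul_cancel₀ ht, one_smul])

lemma symProd_apply (u v : Fin n → ℝ) (i j : Fin n) :
    symProd u v i j = u i * v j + v i * u j := by
  simp [symProd, vecMulVec]

lemma symProd_ne_zero {u v : Fin n → ℝ} (hu : u ≠ 0) (hv : v ≠ 0) :
    symProd u v ≠ 0 := by
  obtain ⟨i, hi⟩ := Function.ne_iff.1 hu
  obtain ⟨j, hj⟩ := Function.ne_iff.1 hv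
  simp only [Pi.zero_apply] at hi hj
  intro h
  have h1 : u i * v i + v i * u i = 0 := by
    have := congrFun (congrFun h i) i; rwa [symProd_apply] at this
  have h2 : u j * v j + v j * u j = 0 := by
    have := congrFun (congrFun h j) j; rwa [symProd_apply] at this
  have h3 : u i * v j + v i * u j = 0 := by
    have := congrFun (congrFun h i) j; rwa [symProd_apply] at this
  have hvi : v i = 0 := by
    have h1' : u i * v i = 0 := by linarith
    exact (mul_eq_zero.1 h1').resolve_left hi
  have huj : u j = 0 := by
    have h2' : v j * u j = 0 := by linarith
    exact (mul_eq_zero.1 h2').resolve_left hj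
  rw [hvi, huj] at h3
  simp at h3
  rcases h3 with h | h
  exacts [hi h, hj h]

lemma vmv_mulVec (u v x : Fin n → ℝ) :
    vecMulVec u v *ᵥ x = (v ⬝ᵥ x) • u := by
  ext i
  simp [vecMulVec, mulVec, dotProduct, Finset.mul_sum, mul_assoc, mul_comm, mul_left_comm]

lemma qf (u v x : Fin n → ℝ) :
    x ⬝ᵥ (symProd u v *ᵥ x) = 2 * ((u ⬝ᵥ x) * (v ⬝ᵥ x)) := by
  rw [symProd, add_mulVec, vmv_mulVec, vmv_mulVec, dotProduct_add,
    dotProduct_smul, dotProduct_smul, smul_eq_mul, smul_eq_mul,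
    dotProduct_comm x u, dotProduct_comm x v]
  ring

lemma prod_forms_zero {u v : Fin n → ℝ} (H : ∀ x, (u ⬝ᵥ x) * (v ⬝ᵥ x) = 0) :
    u = 0 ∨ v = 0 := by
  by_cases hu : u = 0
  · exact Or.inl hu
  · right
    have hP : u ⬝ᵥ u ≠ 0 := fun h => hu (dotProduct_self_eq_zero.1 h)
    have key : ∀ y : Fin n → ℝ, v ⬝ᵥ y = 0 := by
      intro y
      have h' : ∀ s : ℝ, (u ⬝ᵥ y + s * (u ⬝ᵥ u)) * (v ⬝ᵥ y + s * (v ⬝ᵥ u)) = 0 := by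
        intro s
        have := H (y + s • u)
        simpa [dotProduct_add, dotProduct_smul, smul_eq_mul] using this
      have h0 := h' 0
      have h1 := h' 1
      have hm1 := h' (-1)
      have hQ : v ⬝ᵥ u = 0 := by
        have : (u ⬝ᵥ u) * (v ⬝ᵥ u) = 0 := by nlinarith
        exact (mul_eq_zero.1 this).resolve_left hP
      have : (u ⬝ᵥ u) * (v ⬝ᵥ y) = 0 := by nlinarith
      exact (mul_eq_zero.1 this).resolve_left hP
    have := key v
    rw [dotProduct_comm] at this
    exact dotProduct_self_eq_zero.1 this

lemma ker_sub {u v : Fin n → ℝ} (hu : u ≠ 0)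
    (H : ∀ x, u ⬝ᵥ x = 0 → v ⬝ᵥ x = 0) : ∃ l : ℝ, v = l • u := by
  have hP : u ⬝ᵥ u ≠ 0 := fun h => hu (dotProduct_self_eq_zero.1 h)
  set l : ℝ := (v ⬝ᵥ u) / (u ⬝ᵥ u) with hl
  refine ⟨l, ?_⟩
  have key : ∀ x, v ⬝ᵥ x = l * (u ⬝ᵥ x) := by
    intro x
    have h0 : u ⬝ᵥ (x - ((u ⬝ᵥ x) / (u ⬝ᵥ u)) • u) = 0 := by
      simp [dotProduct_sub, dotProduct_smul, smul_eq_mul]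
      field_simp
      ring
    have := H _ h0
    simp only [dotProduct_sub, dotProduct_smul, smul_eq_mul, sub_eq_zero] at this
    rw [this, hl]; ring
  have w0 : (v - l • u) ⬝ᵥ (v - l • u) = 0 := by
    simp only [sub_dotProduct, smul_dotProduct, smul_eq_mul, key (v - l • u)]
    ring
  have := dotProduct_self_eq_zero.1 w0
  rw [sub_eq_zero] at this
  exact this

lemma ker_union {a c d : Fin n → ℝ}
    (H : ∀ x, a ⬝ᵥ x = 0 → (c ⬝ᵥ x) * (d ⬝ᵥ x) = 0) :
    (∀ x, a ⬝ᵥ x = 0 → c ⬝ᵥ x = 0) ∨ (∀ x, a ⬝ᵥ x = 0 → d ⬝ᵥ x = 0) := by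
  by_cases hC : ∀ x, a ⬝ᵥ x = 0 → c ⬝ᵥ x = 0
  · exact Or.inl hC
  · right
    push_neg at hC
    obtain ⟨x0, hax0, hcx0⟩ := hC
    intro y hy
    have h' : ∀ s : ℝ, (c ⬝ᵥ x0 + s * (c ⬝ᵥ y)) * (d ⬝ᵥ x0 + s * (d ⬝ᵥ y)) = 0 := by
      intro s
      have := H (x0 + s • y) (by simp [dotProduct_add, dotProduct_smul, smul_eq_mul, hax0, hy])
      simpa [dotProduct_add, dotProduct_smul, smul_eq_mul] using this
    have h0 : (c ⬝ᵥ x0) * (d ⬝ᵥ x0) = 0 := by simpa using h' 0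
    have h1 := h' 1
    have hm1 := h' (-1)
    have hD : d ⬝ᵥ x0 = 0 := (mul_eq_zero.1 h0).resolve_left hcx0
    have : (c ⬝ᵥ x0) * (d ⬝ᵥ y) = 0 := by nlinarith
    exact (mul_eq_zero.1 this).resolve_left hcx0

lemma symProd_smul_smul (k l : ℝ) (u v : Fin n → ℝ) :
    symProd (k • u) (l • v) = (k * l) • symProd u v := by
  ext i j
  simp [symProd_apply, Matrix.smul_apply, smul_eq_mul, Pi.smul_apply]
  ring

lemma symProd_comm (u v : Fin n → ℝ) : symProd u v = symProd v u := by
  ext i j; simp [symProd_apply]; ring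

end Stmt17Aux

open Stmt17Aux in
/-- For nonzero `a, b, c, d ∈ ℝⁿ`, `{a ∨ b, c ∨ d}` is linearly dependent
iff (`{a,c}` and `{b,d}` are both linearly dependent) or (`{a,d}` and `{b,c}` are both
linearly dependent). -/
theorem stmt17 {n : ℕ} (a b c d : Fin n → ℝ)
    (ha : a ≠ 0) (hb : b ≠ 0) (hc : c ≠ 0) (hd : d ≠ 0) :
    ¬ LinearIndependent ℝ ![symProd a b, symProd c d] ↔
      (¬ LinearIndependent ℝ ![a, c] ∧ ¬ LinearIndependent ℝ ![b, d]) ∨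
      (¬ LinearIndependent ℝ ![a, d] ∧ ¬ LinearIndependent ℝ ![b, c]) := by
  have hM1 := symProd_ne_zero ha hb
  have hM2 := symProd_ne_zero hc hd
  rw [pair_dep_iff hM1 hM2, pair_dep_iff ha hc, pair_dep_iff hb hd,
    pair_dep_iff ha hd, pair_dep_iff hb hc]
  constructor
  · rintro ⟨t, ht, hEq⟩
    have H : ∀ x, (c ⬝ᵥ x) * (d ⬝ᵥ x) = t * ((a ⬝ᵥ x) * (b ⬝ᵥ x)) := by
      intro x
      have h1 := congrArg (fun M => x ⬝ᵥ (M *ᵥ x)) hEq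
      simp only [smul_mulVec, dotProduct_smul, smul_eq_mul, qf] at h1
      linarith
    have H' : ∀ x, a ⬝ᵥ x = 0 → (c ⬝ᵥ x) * (d ⬝ᵥ x) = 0 := by
      intro x hx; rw [H x, hx]; ring
    rcases ker_union H' with hker | hker
    · -- c = l • a
      obtain ⟨l, hcl⟩ := ker_sub ha hker
      have hl : l ≠ 0 := by rintro rfl; simp at hcl; exact hc hcl
      left
      have key : ∀ x, (a ⬝ᵥ x) * ((l • d - t • b) ⬝ᵥ x) = 0 := by
        intro x
        have hx := H x
        rw [hcl] at hx
        simp only [smul_dotProduct, smul_eq_mul, sub_dotProduct] at hx ⊢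
        nlinarith [hx]
      rcases prod_forms_zero key with h | h
      · exact absurd h ha
      · rw [sub_eq_zero] at h
        have hdb : d = (t / l) • b := by
          have := congrArg (fun z => l⁻¹ • z) h
          simpa [smul_smul, inv_mul_cancel₀ hl, div_eq_mul_inv, mul_comm] using this
        exact ⟨⟨l, hl, hcl⟩, ⟨t / l, div_ne_zero ht hl, hdb⟩⟩
    · -- d = l • a
      obtain ⟨l, hdl⟩ := ker_sub ha hker
      have hl : l ≠ 0 := by rintro rfl; simp at hdl; exact hd hdl
      right
      have key : ∀ x, (a ⬝ᵥ x) * ((l • c - t • b) ⬝ᵥ x) = 0 := by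
        intro x
        have hx := H x
        rw [hdl] at hx
        simp only [smul_dotProduct, smul_eq_mul, sub_dotProduct] at hx ⊢
        nlinarith [hx]
      rcases prod_forms_zero key with h | h
      · exact absurd h ha
      · rw [sub_eq_zero] at h
        have hcb : c = (t / l) • b := by
          have := congrArg (fun z => l⁻¹ • z) h
          simpa [smul_smul, inv_mul_cancel₀ hl, div_eq_mul_inv, mul_comm] using this
        exact ⟨⟨l, hl, hdl⟩, ⟨t / l, div_ne_zero ht hl, hcb⟩⟩
  · rintro (⟨⟨k, hk, hck⟩, ⟨m, hm, hdm⟩⟩ | ⟨⟨k, hk, hdk⟩, ⟨m, hm, hcm⟩⟩)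
    · exact ⟨k * m, mul_ne_zero hk hm, by rw [hck, hdm, symProd_smul_smul]⟩
    · refine ⟨k * m, mul_ne_zero hk hm, ?_⟩
      rw [hdk, hcm, symProd_comm, symProd_smul_smul]
end
end

section
/- Let W = span{e^1 ∨ (e^1 + e^2), e^2 ∨ e^2} ⊆ Sym(2), where e^1, e^2 is the standard basis of R^2. Then dim W = 2, and W ∩ (x ∨ R^2) ≠ {0} for every nonzero x ∈ R^2, yet there is no nonzero b ∈ R^2 with W = R^2 ∨ b. -/
noncomputable section
open Matrix

/-- For `W = span {e¹ ∨ (e¹ + e²), e² ∨ e²} ⊆ Sym(2)`: `dim W = 2`,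
`W ∩ (x ∨ ℝ²) ≠ {0}` for every nonzero `x ∈ ℝ²`, but `W ≠ ℝ² ∨ b` for every nonzero
`b ∈ ℝ²`. -/
theorem stmt18 (e1 e2 : Fin 2 → ℝ) (he1 : e1 = Pi.single 0 1) (he2 : e2 = Pi.single 1 1)
    (W : Submodule ℝ (Matrix (Fin 2) (Fin 2) ℝ))
    (hW : W = Submodule.span ℝ {symProd e1 (e1 + e2), symProd e2 e2}) :
    Module.finrank ℝ W = 2 ∧
      (∀ x : Fin 2 → ℝ, x ≠ 0 →
        ∃ M : Matrix (Fin 2) (Fin 2) ℝ, M ∈ W ∧ M ≠ 0 ∧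
          ∃ y : Fin 2 → ℝ, M = symProd x y) ∧
      ¬ ∃ b : Fin 2 → ℝ, b ≠ 0 ∧ W = symLine 2 b := by
  have hA : symProd e1 (e1 + e2) = !![2,1;1,0] := by
    subst he1 he2
    ext i j; fin_cases i <;> fin_cases j <;>
      simp [symProd, vecMulVec_apply, Pi.single_apply] <;> norm_num
  have hB : symProd e2 e2 = !![0,0;0,2] := by
    subst he2
    ext i j; fin_cases i <;> fin_cases j <;>
      simp [symProd, vecMulVec_apply, Pi.single_apply] <;> norm_num
  rw [hA, hB] at hW
  set A : Matrix (Fin 2) (Fin 2) ℝ := !![2,1;1,0] with hA'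
  set B : Matrix (Fin 2) (Fin 2) ℝ := !![0,0;0,2] with hB'
  have hAmem : A ∈ W := hW ▸ Submodule.subset_span (Set.mem_insert _ _)
  have hBmem : B ∈ W := hW ▸ Submodule.subset_span (Set.mem_insert_of_mem _ rfl)
  refine ⟨?_, ?_, ?_⟩
  · -- finrank = 2
    have hind : LinearIndependent ℝ ![A, B] := by
      rw [LinearIndependent.pair_iff]
      intro s t hst
      have h01 := congrFun (congrFun hst 0) 1
      have h11 := congrFun (congrFun hst 1) 1
      simp [hA', hB'] at h01 h11
      exact ⟨h01, h11⟩
    have hrange : ({A, B} : Set (Matrix (Fin 2) (Fin 2) ℝ)) = Set.range ![A, B] := by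
      ext M; simp [Fin.exists_fin_two]; tauto
    rw [hW, hrange, finrank_span_eq_card hind]
    simp
  · -- second part
    intro x hx
    by_cases h0 : x 0 = 0
    · have h1 : x 1 ≠ 0 := by
        intro h1; apply hx; funext i; fin_cases i <;> simp [h0, h1]
      refine ⟨B, hBmem, ?_, ![0, 1 / x 1], ?_⟩
      · intro h; have := congrFun (congrFun h 1) 1; simp [hB'] at this
      · ext i j; fin_cases i <;> fin_cases j <;>
          simp only [symProd, Matrix.add_apply, vecMulVec_apply] <;>
          simp [hB', h0] <;> field_simp <;> norm_num
    · refine ⟨(x 0) • A + (x 1 * ((x 0 - x 1) / x 0)) • B, ?_, ?_,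
        ![1, (x 0 - x 1) / x 0], ?_⟩
      · exact Submodule.add_mem _ (Submodule.smul_mem _ _ hAmem) (Submodule.smul_mem _ _ hBmem)
      · intro h; have := congrFun (congrFun h 0) 0
        simp [hA', hB', Matrix.add_apply, Matrix.smul_apply, Matrix.zero_apply] at this
        exact h0 (by linarith)
      · ext i j; fin_cases i <;> fin_cases j <;>
          simp only [symProd, Matrix.add_apply, vecMulVec_apply] <;>
          simp [hA', hB'] <;> (try field_simp) <;> ring
  · -- third part
    rintro ⟨b, hb0, hWb⟩
    rw [hWb] at hAmem hBmem
    obtain ⟨x, hx⟩ := hAmem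
    obtain ⟨u, hu⟩ := hBmem
    have hx00 := congrFun (congrFun hx 0) 0
    have hx01 := congrFun (congrFun hx 0) 1
    have hx11 := congrFun (congrFun hx 1) 1
    have hu00 := congrFun (congrFun hu 0) 0
    have hu01 := congrFun (congrFun hu 0) 1
    have hu11 := congrFun (congrFun hu 1) 1
    simp [hA', hB', symProd, vecMulVec_apply] at hx00 hx01 hx11 hu00 hu01 hu11
    have h1 : u 1 * b 1 = 1 := by linarith
    have hb1 : b 1 ≠ 0 := fun h => by rw [h, mul_zero] at h1; exact one_ne_zero h1.symm
    have hx1 : x 1 = 0 := by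
      have hz : x 1 * b 1 = 0 := by linarith
      rcases mul_eq_zero.mp hz with h | h
      · exact h
      · exact absurd h hb1
    have hb0 : b 0 ≠ 0 := by
      intro h; rw [h] at hx00; simp at hx00
    have hu0 : u 0 = 0 := by
      have hz : u 0 * b 0 = 0 := by linarith
      rcases mul_eq_zero.mp hz with h | h
      · exact h
      · exact absurd h hb0
    have hu1 : u 1 = 0 := by
      rw [hu0] at hu01
      have hz : b 0 * u 1 = 0 := by linarith
      rcases mul_eq_zero.mp hz with h | h
      · exact absurd h hb0
      · exact h
    rw [hu1, zero_mul] at h1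
    exact one_ne_zero h1.symm
end
end
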